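/- arXiv:2110.00873 — 3 statements merged into one kernel-verified Lean document; each statement's English description precedes it below -/
import Mathlib

section
/- Assume (A1). Then there exists a constant c = c(d, M, β) ≥ 1 such that c^{-1} r^{-d} K(r) ≤ ν(r) ≤ c r^{-d} K(r) for all r > 0. -/
open MeasureTheory Filter Real
open scoped RealInnerProductSpace

noncomputable section

/-- Pruitt's concentration function `K(r) = r⁻² ∫_{|z|<r} |z|² ν(|z|) dz`. -/
def K (d : ℕ) (ν : ℝ → ℝ) (r : ℝ) : ℝ :=
  (∫ z in Metric.ball (0 : EuclideanSpace ℝ (Fin d)) r, ‖z‖ ^ 2 * ν ‖z‖) / r ^ 2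

/-- Pruitt's concentration function `h(r) = ∫ (|z|²/r² ∧ 1) ν(|z|) dz`. -/
def hfun (d : ℕ) (ν : ℝ → ℝ) (r : ℝ) : ℝ :=
  ∫ z : EuclideanSpace ℝ (Fin d), min (‖z‖ ^ 2 / r ^ 2) 1 * ν ‖z‖

/-- The characteristic (Lévy–Khintchine) exponent `ψ(ξ) = ∫ (1 - cos⟪ξ,z⟫) ν(|z|) dz`. -/
def ψ (d : ℕ) (ν : ℝ → ℝ) (ξ : EuclideanSpace ℝ (Fin d)) : ℝ :=
  ∫ z : EuclideanSpace ℝ (Fin d), (1 - Real.cos ⟪ξ, z⟫) * ν ‖z‖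

/-- The radial nondecreasing majorant `ψ*(r) = sup_{|z| ≤ r} ψ(z)`. -/
def ψstar (d : ℕ) (ν : ℝ → ℝ) (r : ℝ) : ℝ :=
  sSup {y : ℝ | ∃ z : EuclideanSpace ℝ (Fin d), ‖z‖ ≤ r ∧ ψ d ν z = y}

/-- The generalized inverse `ψ⁻¹(u) = sup {r ≥ 0 : ψ*(r) = u}`. -/
def ψinv (d : ℕ) (ν : ℝ → ℝ) (u : ℝ) : ℝ :=
  sSup {r : ℝ | 0 ≤ r ∧ ψstar d ν r = u}

/-- Characteristic exponent `ψˢ(ξ) = s·ψ(ψ⁻¹(1/s)ξ)` of the rescaled process. -/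
def ψs (d : ℕ) (ν : ℝ → ℝ) (s : ℝ) (ξ : EuclideanSpace ℝ (Fin d)) : ℝ :=
  s * ψ d ν (ψinv d ν (1 / s) • ξ)

/-- Lévy density `νˢ(x) = s·ψ⁻¹(1/s)^{-d}·ν(x/ψ⁻¹(1/s))` of the rescaled process. -/
def νs (d : ℕ) (ν : ℝ → ℝ) (s : ℝ) (x : EuclideanSpace ℝ (Fin d)) : ℝ :=
  s / ψinv d ν (1 / s) ^ d * ν (‖x‖ / ψinv d ν (1 / s))

/-- `ψ^{-1,s}(u) = ψ⁻¹(u/s)/ψ⁻¹(1/s)`. -/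
def ψinvs (d : ℕ) (ν : ℝ → ℝ) (s u : ℝ) : ℝ :=
  ψinv d ν (u / s) / ψinv d ν (1 / s)

/-- The stable constant `𝒜(d,α)`. -/
def Aconst (d : ℕ) (α : ℝ) : ℝ :=
  α * (2 : ℝ) ^ (α - 1) * Real.Gamma (((d : ℝ) + α) / 2) /
    (Real.Gamma (1 - α / 2) * Real.pi ^ ((d : ℝ) / 2))

/-- Heat kernel of the rescaled process, via Fourier inversion. -/
def pts (d : ℕ) (ν : ℝ → ℝ) (s t : ℝ) (x : EuclideanSpace ℝ (Fin d)) : ℝ :=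
  ((2 * Real.pi) ^ d)⁻¹ *
    ∫ ξ : EuclideanSpace ℝ (Fin d), Real.cos ⟪ξ, x⟫ * Real.exp (-(t * ψs d ν s ξ))

/-- Heat kernel of the isotropic α-stable process. -/
def ptα (d : ℕ) (α t : ℝ) (x : EuclideanSpace ℝ (Fin d)) : ℝ :=
  ((2 * Real.pi) ^ d)⁻¹ *
    ∫ ξ : EuclideanSpace ℝ (Fin d), Real.cos ⟪ξ, x⟫ * Real.exp (-(t * ‖ξ‖ ^ α))

/-- Heat kernel of the original process, via Fourier inversion. -/
def pt (d : ℕ) (ν : ℝ → ℝ) (t : ℝ) (x : EuclideanSpace ℝ (Fin d)) : ℝ :=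
  ((2 * Real.pi) ^ d)⁻¹ *
    ∫ ξ : EuclideanSpace ℝ (Fin d), Real.cos ⟪ξ, x⟫ * Real.exp (-(t * ψ d ν ξ))

open Set Metric

theorem statement3
    (d : ℕ) (hd : 1 ≤ d) (ν : ℝ → ℝ)
    (hν_pos : ∀ r : ℝ, 0 < r → 0 < ν r)
    (hν_mono : ∀ r₁ r₂ : ℝ, 0 < r₁ → r₁ ≤ r₂ → ν r₂ ≤ ν r₁)
    (hint : Integrable (fun z : EuclideanSpace ℝ (Fin d) => min (‖z‖ ^ 2) 1 * ν ‖z‖))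
    (β M : ℝ) (hβ : β ∈ Set.Ioo (0:ℝ) 2) (hM : 1 < M)
    (hA1 : ∀ r₁ r₂ : ℝ, 0 < r₁ → r₁ < r₂ → ν r₁ ≤ M * (r₂ / r₁) ^ ((d:ℝ) + β) * ν r₂)
:
    ∃ c : ℝ, 1 ≤ c ∧ ∀ r : ℝ, 0 < r →
      c⁻¹ * (K d ν r / r ^ d) ≤ ν r ∧ ν r ≤ c * (K d ν r / r ^ d) := by
  obtain ⟨hβ0, hβ2⟩ := hβ
  set E := EuclideanSpace ℝ (Fin d)
  haveI : Nontrivial E := Module.nontrivial_of_finrank_pos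
    (by rw [finrank_euclideanSpace_fin]; exact hd)
  have hfr : Module.finrank ℝ E = d := finrank_euclideanSpace_fin
  set f : E → ℝ := fun z => ‖z‖ ^ 2 * ν ‖z‖ with hf_def
  set ω : ℝ := (volume (ball (0:E) 1)).toReal with hω_def
  have hω : 0 < ω := ENNReal.toReal_pos (measure_ball_pos _ _ one_pos).ne' measure_ball_lt_top.ne
  have hprod : ∀ z : E, f z = max (‖z‖ ^ 2) 1 * (min (‖z‖ ^ 2) 1 * ν ‖z‖) := by
    intro z; rw [← mul_assoc, max_mul_min, mul_one]
  have h0 : ∀ᵐ z : E ∂volume, z ≠ 0 := by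
    rw [ae_iff]
    simpa using measure_singleton (0 : E)
  have hf_nonneg : ∀ᵐ z : E ∂volume, 0 ≤ f z := by
    filter_upwards [h0] with z hz
    exact mul_nonneg (by positivity) (hν_pos _ (norm_pos_iff.2 hz)).le
  have hf_aesm : AEStronglyMeasurable f volume := by
    have hc : Continuous fun z : E => max (‖z‖ ^ 2) (1:ℝ) :=
      (continuous_norm.pow 2).max continuous_const
    exact (hc.aestronglyMeasurable.mul hint.aestronglyMeasurable).congr
      (Eventually.of_forall fun z => (hprod z).symm)
  have hf_int : ∀ r : ℝ, 0 < r → IntegrableOn f (closedBall (0:E) r) volume := by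
    intro r hr
    refine Integrable.mono' ((hint.integrableOn (s := closedBall (0:E) r)).const_mul
      (max (r ^ 2) 1)) hf_aesm.restrict ?_
    filter_upwards [ae_restrict_mem measurableSet_closedBall, ae_restrict_of_ae h0,
      ae_restrict_of_ae hf_nonneg] with z hz hz0 hzn
    have hν0 : 0 < ν ‖z‖ := hν_pos _ (norm_pos_iff.2 hz0)
    have hgz : 0 ≤ min (‖z‖ ^ 2) 1 * ν ‖z‖ := mul_nonneg (le_min (by positivity) one_pos.le) hν0.le
    rw [Real.norm_eq_abs, abs_of_nonneg hzn, hprod z]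
    have hzr : ‖z‖ ≤ r := by simpa [mem_closedBall, dist_zero_right] using hz
    exact mul_le_mul_of_nonneg_right
      (max_le_max (pow_le_pow_left₀ (norm_nonneg z) hzr 2) le_rfl) hgz
  have hlow : ∀ r : ℝ, 0 < r →
      ν r * ((r/2)^2 * ((r^d - (r/2)^d) * ω)) ≤ ∫ z in ball (0:E) r, f z := by
    intro r hr
    set S : Set E := ball (0:E) r \ closedBall (0:E) (r/2) with hS_def
    have hSm : MeasurableSet S := measurableSet_ball.diff measurableSet_closedBall
    have hSfin : volume S ≠ ⊤ :=
      ((measure_mono diff_subset).trans_lt measure_ball_lt_top).ne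
    have hSvol : (volume S).toReal = (r^d - (r/2)^d) * ω := by
      rw [hS_def, measure_diff (closedBall_subset_ball (by linarith))
        measurableSet_closedBall.nullMeasurableSet measure_closedBall_lt_top.ne,
        Measure.addHaar_ball _ _ hr.le, Measure.addHaar_closedBall _ _ (by positivity), hfr,
        ENNReal.toReal_sub_of_le (mul_le_mul_left (ENNReal.ofReal_le_ofReal
          (pow_le_pow_left₀ (by positivity) (by linarith) d)) _)
        (ENNReal.mul_ne_top ENNReal.ofReal_ne_top measure_ball_lt_top.ne),
        ENNReal.toReal_mul, ENNReal.toReal_mul, ENNReal.toReal_ofReal (by positivity),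
        ENNReal.toReal_ofReal (by positivity)]
      ring
    have hpt : ∀ z ∈ S, (r/2)^2 * ν r ≤ f z := by
      intro z hz
      obtain ⟨hz1, hz2⟩ := hz
      rw [mem_ball, dist_zero_right] at hz1
      rw [mem_closedBall, dist_zero_right, not_le] at hz2
      exact mul_le_mul (pow_le_pow_left₀ (by positivity) hz2.le 2)
        (hν_mono _ _ (lt_trans (by positivity) hz2) hz1.le) (hν_pos r hr).le (by positivity)
    calc ν r * ((r/2)^2 * ((r^d - (r/2)^d) * ω)) = ((r/2)^2 * ν r) * (volume S).toReal := by
          rw [hSvol]; ring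
      _ ≤ ∫ z in S, f z := by
          have h := setIntegral_ge_of_const_le hSm hSfin hpt
            ((hf_int r hr).mono_set (diff_subset.trans ball_subset_closedBall))
          rw [smul_eq_mul, mul_comm, measureReal_def] at h
          exact h
      _ ≤ ∫ z in ball (0:E) r, f z := setIntegral_mono_set
          ((hf_int r hr).mono_set ball_subset_closedBall)
          (ae_restrict_of_ae hf_nonneg) (HasSubset.Subset.eventuallyLE diff_subset)
  set ρ : ℝ := (2:ℝ) ^ (β - 2) with hρ_def
  have h2 : (0:ℝ) < 2 := two_pos
  have hρ0 : 0 ≤ ρ := Real.rpow_nonneg (by norm_num) _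
  have hρ1 : ρ < 1 := Real.rpow_lt_one_of_one_lt_of_neg one_lt_two (by linarith)
  have T : ∀ n : ℕ, ((2:ℝ)⁻¹^n)^2 * (((2:ℝ)⁻¹^n)^d * ((2:ℝ)^(n+1)) ^ ((d:ℝ)+β))
      = (2:ℝ)^((d:ℝ)+β) * ρ^n := by
    intro n
    have e1 : ((2:ℝ)⁻¹)^n = (2:ℝ) ^ (-(n:ℝ)) := by
      rw [inv_pow, ← Real.rpow_natCast (2:ℝ) n, ← Real.rpow_neg h2.le]
    have e2 : ((2:ℝ))^(n+1) = (2:ℝ) ^ ((n:ℝ)+1) := by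
      rw [← Real.rpow_natCast (2:ℝ) (n+1)]; push_cast; ring_nf
    have e3 : ∀ (a : ℝ) (m : ℕ), ((2:ℝ)^a)^m = (2:ℝ)^(a*m) := fun a m => by
      rw [Real.rpow_mul h2.le, Real.rpow_natCast]
    rw [hρ_def, e1, e2, e3 _ 2, e3 _ d, e3 _ n, ← Real.rpow_mul h2.le,
      ← Real.rpow_add h2, ← Real.rpow_add h2, ← Real.rpow_add h2]
    congr 1; push_cast; ring
  have hupper : ∀ r : ℝ, 0 < r → ∫ z in ball (0:E) r, f z ≤
      M * ν r * ω * (r^2 * r^d) * ((2:ℝ) ^ ((d:ℝ) + β) * (1 - ρ)⁻¹) := by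
    intro r hr
    set A : ℕ → Set E := fun n =>
      closedBall (0:E) ((2:ℝ)⁻¹^n * r) \ closedBall (0:E) ((2:ℝ)⁻¹^(n+1) * r) with hA_def
    have hmem : ∀ (n : ℕ) (z : E), z ∈ A n ↔
        (2:ℝ)⁻¹^(n+1) * r < ‖z‖ ∧ ‖z‖ ≤ (2:ℝ)⁻¹^n * r := by
      intro n z
      simp [hA_def, Set.mem_diff, mem_closedBall, dist_zero_right, not_le, and_comm]
    have hAm : ∀ n, MeasurableSet (A n) := fun n =>
      measurableSet_closedBall.diff measurableSet_closedBall
    have hA_sub : ∀ n, A n ⊆ closedBall (0:E) r := by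
      intro n
      refine diff_subset.trans (closedBall_subset_closedBall ?_)
      calc (2:ℝ)⁻¹^n * r ≤ 1 * r := by
            have : ((2:ℝ)⁻¹)^n ≤ 1 := pow_le_one₀ (by norm_num) (by norm_num)
            nlinarith
        _ = r := one_mul r
    have hdisj : Pairwise (Function.onFun Disjoint A) := by
      refine (pairwise_disjoint_on A).2 fun m n hmn => Set.disjoint_left.2 fun z hzm hzn => ?_
      have h1 := ((hmem m z).1 hzm).1
      have hb := ((hmem n z).1 hzn).2
      have hc : ((2:ℝ)⁻¹)^n ≤ (2:ℝ)⁻¹^(m+1) :=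
        pow_le_pow_of_le_one (by norm_num) (by norm_num) hmn
      nlinarith
    have hcover : ball (0:E) r \ {0} ⊆ ⋃ n, A n := by
      intro z hz
      obtain ⟨hz1, hz2⟩ := hz
      rw [mem_ball, dist_zero_right] at hz1
      have hz0 : 0 < ‖z‖ := norm_pos_iff.2 hz2
      obtain ⟨n, hn1, hn2⟩ := exists_nat_pow_near (x := r / ‖z‖) (y := (2:ℝ))
        ((one_le_div hz0).2 hz1.le) one_lt_two
      refine Set.mem_iUnion.2 ⟨n, (hmem n z).2 ⟨?_, ?_⟩⟩
      · rw [inv_pow, inv_mul_eq_div, div_lt_iff₀ (by positivity)]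
        have := (div_lt_iff₀ hz0).1 hn2
        linarith
      · rw [inv_pow, inv_mul_eq_div, le_div_iff₀ (by positivity)]
        have := (le_div_iff₀ hz0).1 hn1
        linarith
    have hterm : ∀ n : ℕ, ∫ z in A n, f z ≤
        (M * ν r * ω * (r^2 * r^d) * (2:ℝ) ^ ((d:ℝ)+β)) * ρ ^ n := by
      intro n
      have hrn : (0:ℝ) < (2:ℝ)⁻¹^(n+1) * r := by positivity
      have hlt : (2:ℝ)⁻¹^(n+1) * r < r := by
        have : ((2:ℝ)⁻¹)^(n+1) < 1 := pow_lt_one₀ (by norm_num) (by norm_num) (Nat.succ_ne_zero n)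
        nlinarith
      have hν1 : ν ((2:ℝ)⁻¹^(n+1) * r) ≤ M * ((2:ℝ)^(n+1)) ^ ((d:ℝ)+β) * ν r := by
        have h := hA1 ((2:ℝ)⁻¹^(n+1)*r) r hrn hlt
        rwa [show r / ((2:ℝ)⁻¹^(n+1)*r) = (2:ℝ)^(n+1) by rw [inv_pow]; field_simp] at h
      set Cn : ℝ := ((2:ℝ)⁻¹^n*r)^2 * (M * ((2:ℝ)^(n+1)) ^ ((d:ℝ)+β) * ν r) with hCn_def
      have hCn0 : 0 ≤ Cn := by
        have := (hν_pos r hr).le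
        have : (0:ℝ) ≤ M * ((2:ℝ)^(n+1)) ^ ((d:ℝ)+β) * ν r := by positivity
        positivity
      have hpt : ∀ z ∈ A n, ‖f z‖ ≤ Cn := by
        intro z hz
        obtain ⟨hlo, hhi⟩ := (hmem n z).1 hz
        have hz0 : 0 < ‖z‖ := lt_trans hrn hlo
        rw [Real.norm_eq_abs, abs_of_nonneg (mul_nonneg (by positivity) (hν_pos _ hz0).le)]
        exact mul_le_mul (pow_le_pow_left₀ (norm_nonneg z) hhi 2)
          ((hν_mono _ _ hrn hlo.le).trans hν1) (hν_pos _ hz0).le (by positivity)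
      have hAfin : volume (A n) < ⊤ :=
        (measure_mono diff_subset).trans_lt measure_closedBall_lt_top
      have hvol : (volume (A n)).toReal ≤ ((2:ℝ)⁻¹^n * r)^d * ω := by
        have h1 : volume (A n) ≤ volume (closedBall (0:E) ((2:ℝ)⁻¹^n * r)) :=
          measure_mono diff_subset
        rw [Measure.addHaar_closedBall _ _ (by positivity), hfr] at h1
        calc (volume (A n)).toReal
            ≤ (ENNReal.ofReal (((2:ℝ)⁻¹^n * r)^d) * volume (ball (0:E) 1)).toReal :=
              ENNReal.toReal_mono (ENNReal.mul_ne_top ENNReal.ofReal_ne_top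
                measure_ball_lt_top.ne) h1
          _ = ((2:ℝ)⁻¹^n * r)^d * ω := by
              rw [ENNReal.toReal_mul, ENNReal.toReal_ofReal (by positivity)]
      have h3 : ∫ z in A n, f z ≤ Cn * (volume (A n)).toReal := by
        have h2' := norm_setIntegral_le_of_norm_le_const hAfin hpt
        calc ∫ z in A n, f z ≤ ‖∫ z in A n, f z‖ := le_norm_self _
          _ ≤ Cn * (volume (A n)).toReal := h2'
      calc ∫ z in A n, f z ≤ Cn * (((2:ℝ)⁻¹^n * r)^d * ω) :=
            h3.trans (mul_le_mul_of_nonneg_left hvol hCn0)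
        _ = (M * ν r * ω * (r^2 * r^d) * (2:ℝ) ^ ((d:ℝ)+β)) * ρ ^ n := by
            rw [hCn_def, mul_pow, mul_pow]
            linear_combination (M * ν r * ω * r^2 * r^d) * T n
    have hIU : IntegrableOn f (⋃ n, A n) volume :=
      (hf_int r hr).mono_set (Set.iUnion_subset hA_sub)
    have hsum := MeasureTheory.hasSum_integral_iUnion hAm hdisj hIU
    have hgeom : HasSum (fun n : ℕ => (M * ν r * ω * (r^2 * r^d) * (2:ℝ) ^ ((d:ℝ)+β)) * ρ^n)
        ((M * ν r * ω * (r^2 * r^d) * (2:ℝ) ^ ((d:ℝ)+β)) * (1-ρ)⁻¹) :=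
      (hasSum_geometric_of_lt_one hρ0 hρ1).mul_left _
    have hU : ∫ z in ball (0:E) r, f z ≤ ∫ z in ⋃ n, A n, f z := by
      refine setIntegral_mono_set hIU (ae_restrict_of_ae hf_nonneg) ?_
      refine (MeasureTheory.ae_le_set).2 (measure_mono_null ?_ (measure_singleton (0:E)))
      intro z hz
      obtain ⟨hz1, hz2⟩ := hz
      by_contra hne
      exact hz2 (hcover ⟨hz1, by simpa using hne⟩)
    have hfin := hasSum_le hterm hsum hgeom
    calc ∫ z in ball (0:E) r, f z ≤ ∫ z in ⋃ n, A n, f z := hU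
      _ ≤ (M * ν r * ω * (r^2 * r^d) * (2:ℝ) ^ ((d:ℝ)+β)) * (1-ρ)⁻¹ := hfin
      _ = M * ν r * ω * (r^2 * r^d) * ((2:ℝ) ^ ((d:ℝ)+β) * (1-ρ)⁻¹) := by ring
  have hd0 : d ≠ 0 := by omega
  set c₁ : ℝ := M * ω * (2:ℝ)^((d:ℝ)+β) * (1-ρ)⁻¹ with hc₁_def
  have hc₁ : 0 < c₁ := by
    have h1ρ : (0:ℝ) < 1 - ρ := by linarith
    have hM0 : (0:ℝ) < M := by linarith
    positivity
  set D : ℝ := (1 - (2:ℝ)⁻¹^d) * ω with hD_def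
  have hD : 0 < D := by
    have h1 : ((2:ℝ)⁻¹)^d < 1 := pow_lt_one₀ (by norm_num) (by norm_num) hd0
    have h2' : (0:ℝ) < 1 - (2:ℝ)⁻¹^d := by linarith
    positivity
  set c₂ : ℝ := 4 * D⁻¹ with hc₂_def
  refine ⟨max (max c₁ c₂) 1, le_max_right _ _, fun r hr => ?_⟩
  set I : ℝ := ∫ z in ball (0:E) r, f z with hI_def
  have hI0 : 0 ≤ I := integral_nonneg_of_ae (ae_restrict_of_ae hf_nonneg)
  have hKr : K d ν r / r ^ d = I / (r^2 * r^d) := by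
    rw [show K d ν r = I / r ^ 2 from rfl, div_div]
  have hP : (0:ℝ) < r^2 * r^d := by positivity
  have hX0 : (0:ℝ) ≤ I / (r^2 * r^d) := by positivity
  rw [hKr]
  constructor
  · have hcc : (max (max c₁ c₂) 1)⁻¹ ≤ c₁⁻¹ :=
      inv_anti₀ hc₁ ((le_max_left _ _).trans (le_max_left _ _))
    have hIb : I ≤ c₁ * ν r * (r^2 * r^d) := by
      calc I ≤ M * ν r * ω * (r^2*r^d) * ((2:ℝ)^((d:ℝ)+β) * (1-ρ)⁻¹) := hupper r hr
        _ = c₁ * ν r * (r^2*r^d) := by rw [hc₁_def]; ring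
    have h4 : I / (r^2 * r^d) ≤ c₁ * ν r := by
      rw [div_le_iff₀ hP]; linarith
    calc (max (max c₁ c₂) 1)⁻¹ * (I / (r^2*r^d)) ≤ c₁⁻¹ * (c₁ * ν r) :=
          mul_le_mul hcc h4 hX0 (by positivity)
      _ = ν r := by field_simp
  · have hIlow := hlow r hr
    have key : (r/2)^2 * ((r^d - (r/2)^d) * ω) = (r^2*r^d) * (D / 4) := by
      rw [hD_def, div_pow, div_pow, inv_pow]
      field_simp
      ring
    rw [key] at hIlow
    have h6 : ν r * (D/4) ≤ I / (r^2*r^d) := by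
      rw [le_div_iff₀ hP, show ν r * (D/4) * (r^2*r^d) = ν r * ((r^2*r^d)*(D/4)) from by ring]
      exact hIlow
    have h7 : ν r * (D/4) * (4/D) ≤ I/(r^2*r^d) * (4/D) :=
      mul_le_mul_of_nonneg_right h6 (by positivity)
    have h5 : ν r ≤ c₂ * (I / (r^2*r^d)) := by
      calc ν r = ν r * (D/4) * (4/D) := by field_simp
        _ ≤ I/(r^2*r^d) * (4/D) := h7
        _ = c₂ * (I/(r^2*r^d)) := by rw [hc₂_def]; ring
    exact h5.trans (mul_le_mul_of_nonneg_right
      ((le_max_right c₁ c₂).trans (le_max_left _ _)) hX0)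

end
end

section
/- Assume (A1) and (A2). Then for every R > 0 there exists a constant c > 0 such that h(r) ≤ c·K(r) for all r ≥ R. -/
open MeasureTheory Filter Real
open scoped RealInnerProductSpace

noncomputable section

namespace Stmt4Aux

open Metric Set


def tailInt (d : ℕ) (ν : ℝ → ℝ) (a : ℝ) : ℝ :=
  ∫ z in (Metric.ball (0 : EuclideanSpace ℝ (Fin d)) a)ᶜ, ν ‖z‖

variable {d : ℕ} {ν : ℝ → ℝ}

lemma ae_ne_zero (hd : 1 ≤ d) :
    ∀ᵐ z : EuclideanSpace ℝ (Fin d), z ≠ 0 := by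
  haveI : NeZero d := ⟨by omega⟩
  rw [ae_iff]
  simp only [ne_eq, not_not]
  simpa using measure_singleton (0 : EuclideanSpace ℝ (Fin d))

lemma nu_aemeasurable (hd : 1 ≤ d)
    (hint : Integrable (fun z : EuclideanSpace ℝ (Fin d) => min (‖z‖ ^ 2) 1 * ν ‖z‖)) :
    AEMeasurable (fun z : EuclideanSpace ℝ (Fin d) => ν ‖z‖) := by
  have hG : AEMeasurable (fun z : EuclideanSpace ℝ (Fin d) => min (‖z‖ ^ 2) 1 * ν ‖z‖) :=
    hint.aestronglyMeasurable.aemeasurable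
  have hF : AEMeasurable (fun z : EuclideanSpace ℝ (Fin d) =>
      (min (‖z‖ ^ 2) 1 * ν ‖z‖) / min (‖z‖ ^ 2) 1) :=
    hG.div (((continuous_norm.pow 2).min continuous_const).measurable.aemeasurable)
  refine hF.congr ?_
  filter_upwards [ae_ne_zero hd] with z hz
  have hz' : 0 < ‖z‖ := norm_pos_iff.2 hz
  have hm : 0 < min (‖z‖ ^ 2) 1 := lt_min (by positivity) one_pos
  exact mul_div_cancel_left₀ _ hm.ne'

lemma integrableOn_tail (hd : 1 ≤ d)
    (hν_pos : ∀ r : ℝ, 0 < r → 0 < ν r)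
    (hint : Integrable (fun z : EuclideanSpace ℝ (Fin d) => min (‖z‖ ^ 2) 1 * ν ‖z‖))
    {a : ℝ} (ha : 0 < a) :
    IntegrableOn (fun z : EuclideanSpace ℝ (Fin d) => ν ‖z‖)
      (Metric.ball (0 : EuclideanSpace ℝ (Fin d)) a)ᶜ := by
  refine Integrable.mono'
    ((hint.const_mul (min (a ^ 2) 1)⁻¹).integrableOn)
    (nu_aemeasurable hd hint).aestronglyMeasurable.restrict ?_
  rw [ae_restrict_iff' measurableSet_ball.compl]
  filter_upwards [ae_ne_zero hd] with z hz hzs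
  have hz1 : a ≤ ‖z‖ := by
    simpa [Metric.mem_ball, dist_zero_right, not_lt] using hzs
  have hz0 : 0 < ‖z‖ := lt_of_lt_of_le ha hz1
  have hνz : 0 ≤ ν ‖z‖ := (hν_pos _ hz0).le
  rw [Real.norm_eq_abs, abs_of_nonneg hνz]
  have hmin : min (a ^ 2) 1 ≤ min (‖z‖ ^ 2) 1 := min_le_min (by nlinarith) le_rfl
  have hminpos : 0 < min (a ^ 2) 1 := lt_min (by positivity) one_pos
  calc ν ‖z‖ = (min (a ^ 2) 1)⁻¹ * (min (a ^ 2) 1 * ν ‖z‖) := by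
        field_simp
    _ ≤ (min (a ^ 2) 1)⁻¹ * (min (‖z‖ ^ 2) 1 * ν ‖z‖) := by
        have := mul_le_mul_of_nonneg_right hmin hνz
        exact mul_le_mul_of_nonneg_left this (by positivity)

lemma integrableOn_ball (hd : 1 ≤ d)
    (hν_pos : ∀ r : ℝ, 0 < r → 0 < ν r)
    (hint : Integrable (fun z : EuclideanSpace ℝ (Fin d) => min (‖z‖ ^ 2) 1 * ν ‖z‖))
    {r : ℝ} (hr : 0 < r) :
    IntegrableOn (fun z : EuclideanSpace ℝ (Fin d) => ‖z‖ ^ 2 * ν ‖z‖)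
      (Metric.ball (0 : EuclideanSpace ℝ (Fin d)) r) := by
  refine Integrable.mono'
    ((hint.const_mul (max (r ^ 2) 1)).integrableOn)
    (((continuous_norm.pow 2).measurable.aemeasurable.mul
      (nu_aemeasurable hd hint)).aestronglyMeasurable.restrict) ?_
  rw [ae_restrict_iff' measurableSet_ball]
  filter_upwards [ae_ne_zero hd] with z hz hzs
  have hzr : ‖z‖ < r := by simpa [dist_zero_right] using hzs
  have hz0 : 0 < ‖z‖ := norm_pos_iff.2 hz
  have hνz : 0 ≤ ν ‖z‖ := (hν_pos _ hz0).le
  rw [Real.norm_eq_abs, abs_of_nonneg (mul_nonneg (by positivity) hνz)]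
  have key : ‖z‖ ^ 2 ≤ max (r ^ 2) 1 * min (‖z‖ ^ 2) 1 := by
    rcases le_total (‖z‖ ^ 2) 1 with h | h
    · rw [min_eq_left h]
      nlinarith [le_max_right (r ^ 2) (1:ℝ), norm_nonneg z]
    · rw [min_eq_right h]
      have : ‖z‖ ^ 2 ≤ r ^ 2 := by nlinarith [norm_nonneg z]
      calc ‖z‖ ^ 2 ≤ r ^ 2 := this
        _ ≤ max (r ^ 2) 1 := le_max_left _ _
        _ = max (r ^ 2) 1 * 1 := (mul_one _).symm
  calc ‖z‖ ^ 2 * ν ‖z‖ ≤ (max (r ^ 2) 1 * min (‖z‖ ^ 2) 1) * ν ‖z‖ :=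
        mul_le_mul_of_nonneg_right key hνz
    _ = max (r ^ 2) 1 * (min (‖z‖ ^ 2) 1 * ν ‖z‖) := by ring

lemma integrable_hfun_integrand (hd : 1 ≤ d)
    (hν_pos : ∀ r : ℝ, 0 < r → 0 < ν r)
    (hint : Integrable (fun z : EuclideanSpace ℝ (Fin d) => min (‖z‖ ^ 2) 1 * ν ‖z‖))
    {r : ℝ} (hr : 0 < r) :
    Integrable (fun z : EuclideanSpace ℝ (Fin d) => min (‖z‖ ^ 2 / r ^ 2) 1 * ν ‖z‖) := by
  refine Integrable.mono' (hint.const_mul (max (r ^ 2)⁻¹ 1)) ?_ ?_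
  · exact ((((continuous_norm.pow 2).div_const _).min
      continuous_const).measurable.aemeasurable.mul
      (nu_aemeasurable hd hint)).aestronglyMeasurable
  · filter_upwards [ae_ne_zero hd] with z hz
    have hz0 : 0 < ‖z‖ := norm_pos_iff.2 hz
    have hνz : 0 ≤ ν ‖z‖ := (hν_pos _ hz0).le
    have h1 : 0 ≤ min (‖z‖ ^ 2 / r ^ 2) 1 := le_min (by positivity) zero_le_one
    rw [Real.norm_eq_abs, abs_of_nonneg (mul_nonneg h1 hνz)]
    have key : min (‖z‖ ^ 2 / r ^ 2) 1 ≤ max (r ^ 2)⁻¹ 1 * min (‖z‖ ^ 2) 1 := by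
      rcases le_total (‖z‖ ^ 2) 1 with h | h
      · rw [min_eq_left h]
        calc min (‖z‖ ^ 2 / r ^ 2) 1 ≤ ‖z‖ ^ 2 / r ^ 2 := min_le_left _ _
          _ = (r ^ 2)⁻¹ * ‖z‖ ^ 2 := by ring
          _ ≤ max (r ^ 2)⁻¹ 1 * ‖z‖ ^ 2 :=
            mul_le_mul_of_nonneg_right (le_max_left _ _) (by positivity)
      · rw [min_eq_right h]
        calc min (‖z‖ ^ 2 / r ^ 2) 1 ≤ 1 := min_le_right _ _
          _ = 1 * 1 := (mul_one _).symm
          _ ≤ max (r ^ 2)⁻¹ 1 * 1 :=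
            mul_le_mul_of_nonneg_right (le_max_right _ _) zero_le_one
    calc min (‖z‖ ^ 2 / r ^ 2) 1 * ν ‖z‖
        ≤ (max (r ^ 2)⁻¹ 1 * min (‖z‖ ^ 2) 1) * ν ‖z‖ :=
          mul_le_mul_of_nonneg_right key hνz
      _ = max (r ^ 2)⁻¹ 1 * (min (‖z‖ ^ 2) 1 * ν ‖z‖) := by ring



variable {d : ℕ} {ν : ℝ → ℝ}

lemma hfun_split (hd : 1 ≤ d)
    (hν_pos : ∀ r : ℝ, 0 < r → 0 < ν r)
    (hint : Integrable (fun z : EuclideanSpace ℝ (Fin d) => min (‖z‖ ^ 2) 1 * ν ‖z‖))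
    {r : ℝ} (hr : 0 < r) :
    hfun d ν r = K d ν r + tailInt d ν r := by
  have h1 := integral_add_compl (μ := volume) measurableSet_ball
    (integrable_hfun_integrand hd hν_pos hint hr)
    (s := Metric.ball (0 : EuclideanSpace ℝ (Fin d)) r)
  have h2 : (∫ z in Metric.ball (0 : EuclideanSpace ℝ (Fin d)) r,
      min (‖z‖ ^ 2 / r ^ 2) 1 * ν ‖z‖) = K d ν r := by
    rw [K, ← integral_div]
    refine setIntegral_congr_fun measurableSet_ball ?_
    intro z hz
    have hzr : ‖z‖ < r := by simpa [dist_zero_right] using hz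
    have hle : ‖z‖ ^ 2 / r ^ 2 ≤ 1 := by
      rw [div_le_one (by positivity)]
      nlinarith [norm_nonneg z]
    dsimp only
    rw [min_eq_left hle]; ring
  have h3 : (∫ z in (Metric.ball (0 : EuclideanSpace ℝ (Fin d)) r)ᶜ,
      min (‖z‖ ^ 2 / r ^ 2) 1 * ν ‖z‖) = tailInt d ν r := by
    refine setIntegral_congr_fun measurableSet_ball.compl ?_
    intro z hz
    have hzr : r ≤ ‖z‖ := by
      simpa [Metric.mem_ball, dist_zero_right, not_lt] using hz
    have hge : (1:ℝ) ≤ ‖z‖ ^ 2 / r ^ 2 := by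
      rw [le_div_iff₀ (by positivity)]; nlinarith
    dsimp only
    rw [min_eq_right hge, one_mul]
  rw [hfun, ← h1, h2, h3]

lemma tail_nonneg (hd : 1 ≤ d)
    (hν_pos : ∀ r : ℝ, 0 < r → 0 < ν r) (a : ℝ) :
    0 ≤ tailInt d ν a := by
  refine integral_nonneg_of_ae ?_
  refine ae_restrict_of_ae ?_
  filter_upwards [ae_ne_zero hd] with z hz
  exact (hν_pos _ (norm_pos_iff.2 hz)).le

lemma tail_mono (hd : 1 ≤ d)
    (hν_pos : ∀ r : ℝ, 0 < r → 0 < ν r)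
    (hint : Integrable (fun z : EuclideanSpace ℝ (Fin d) => min (‖z‖ ^ 2) 1 * ν ‖z‖))
    {a b : ℝ} (ha : 0 < a) (hab : a ≤ b) :
    tailInt d ν b ≤ tailInt d ν a := by
  refine setIntegral_mono_set (integrableOn_tail hd hν_pos hint ha) ?_ ?_
  · refine ae_restrict_of_ae ?_
    filter_upwards [ae_ne_zero hd] with z hz
    exact (hν_pos _ (norm_pos_iff.2 hz)).le
  · exact HasSubset.Subset.eventuallyLE
      (compl_subset_compl.2 (Metric.ball_subset_ball hab))

lemma vol_ball_toReal (hd : 1 ≤ d) {a : ℝ} (ha : 0 < a) :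
    (volume (Metric.ball (0 : EuclideanSpace ℝ (Fin d)) a)).toReal
      = a ^ d * (volume (Metric.ball (0 : EuclideanSpace ℝ (Fin d)) 1)).toReal := by
  rw [Measure.addHaar_ball_of_pos volume _ ha, ENNReal.toReal_mul,
    ENNReal.toReal_ofReal (by positivity), finrank_euclideanSpace_fin]

lemma vol_ball_toReal_pos (hd : 1 ≤ d) {a : ℝ} (ha : 0 < a) :
    0 < (volume (Metric.ball (0 : EuclideanSpace ℝ (Fin d)) a)).toReal :=
  ENNReal.toReal_pos (measure_ball_pos volume 0 ha).ne' measure_ball_lt_top.ne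

lemma K_lower (hd : 1 ≤ d)
    (hν_pos : ∀ r : ℝ, 0 < r → 0 < ν r)
    (hν_mono : ∀ r₁ r₂ : ℝ, 0 < r₁ → r₁ ≤ r₂ → ν r₂ ≤ ν r₁)
    (hint : Integrable (fun z : EuclideanSpace ℝ (Fin d) => min (‖z‖ ^ 2) 1 * ν ‖z‖))
    {r : ℝ} (hr : 0 < r) :
    (1/4 : ℝ) * (1 - (1/2 : ℝ) ^ d)
        * (volume (Metric.ball (0 : EuclideanSpace ℝ (Fin d)) 1)).toReal
        * (r ^ d * ν r) ≤ K d ν r := by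
  set A : Set (EuclideanSpace ℝ (Fin d)) :=
    Metric.ball 0 r \ Metric.ball 0 (r/2) with hA
  have hAmeas : MeasurableSet A := measurableSet_ball.diff measurableSet_ball
  have hsub : Metric.ball (0 : EuclideanSpace ℝ (Fin d)) (r/2) ⊆ Metric.ball 0 r :=
    Metric.ball_subset_ball (by linarith)
  have hAvol : volume A
      = volume (Metric.ball (0 : EuclideanSpace ℝ (Fin d)) r)
        - volume (Metric.ball (0 : EuclideanSpace ℝ (Fin d)) (r/2)) :=
    measure_diff hsub measurableSet_ball.nullMeasurableSet measure_ball_lt_top.ne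
  have hAvol' : (volume A).toReal
      = r ^ d * (volume (Metric.ball (0 : EuclideanSpace ℝ (Fin d)) 1)).toReal
        - (r/2) ^ d * (volume (Metric.ball (0 : EuclideanSpace ℝ (Fin d)) 1)).toReal := by
    rw [hAvol, ENNReal.toReal_sub_of_le (measure_mono hsub) measure_ball_lt_top.ne,
      vol_ball_toReal hd hr, vol_ball_toReal hd (by linarith : (0:ℝ) < r/2)]
  have hAfin : volume A ≠ ⊤ :=
    ((measure_mono diff_subset).trans_lt measure_ball_lt_top).ne
  have hlow : ((r/2) ^ 2 * ν r) * (volume A).toReal ≤ ∫ z in A, ‖z‖ ^ 2 * ν ‖z‖ := by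
    refine Eq.trans_le (b := volume.real A • ((r/2) ^ 2 * ν r))
      (by rw [smul_eq_mul, mul_comm]; rfl) (setIntegral_ge_of_const_le hAmeas hAfin ?_
      ((integrableOn_ball hd hν_pos hint hr).mono_set diff_subset))
    intro z hz
    obtain ⟨hz1, hz2⟩ := hz
    have hzlt : ‖z‖ < r := by simpa [dist_zero_right] using hz1
    have hzge : r/2 ≤ ‖z‖ := by
      simpa [Metric.mem_ball, dist_zero_right, not_lt] using hz2
    have hz0 : 0 < ‖z‖ := lt_of_lt_of_le (by linarith) hzge
    have h1 : (r/2) ^ 2 ≤ ‖z‖ ^ 2 := by nlinarith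
    have h2 : ν r ≤ ν ‖z‖ := hν_mono _ _ hz0 hzlt.le
    have := mul_le_mul h1 h2 (hν_pos r hr).le (by positivity)
    linarith
  have hmono : ∫ z in A, ‖z‖ ^ 2 * ν ‖z‖
      ≤ ∫ z in Metric.ball (0 : EuclideanSpace ℝ (Fin d)) r, ‖z‖ ^ 2 * ν ‖z‖ := by
    refine setIntegral_mono_set (integrableOn_ball hd hν_pos hint hr) ?_
      (HasSubset.Subset.eventuallyLE diff_subset)
    refine ae_restrict_of_ae ?_
    filter_upwards [ae_ne_zero hd] with z hz
    exact mul_nonneg (by positivity) (hν_pos _ (norm_pos_iff.2 hz)).le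
  have hKeq : K d ν r
      = (∫ z in Metric.ball (0 : EuclideanSpace ℝ (Fin d)) r, ‖z‖ ^ 2 * ν ‖z‖) / r ^ 2 := rfl
  rw [hKeq]
  have h2d : (r/2) ^ d = r ^ d * (1/2 : ℝ) ^ d := by
    rw [← mul_pow]; ring_nf
  calc (1/4 : ℝ) * (1 - (1/2 : ℝ) ^ d)
        * (volume (Metric.ball (0 : EuclideanSpace ℝ (Fin d)) 1)).toReal
        * (r ^ d * ν r)
      = ((r/2) ^ 2 * ν r) * (volume A).toReal / r ^ 2 := by
        rw [hAvol', h2d]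
        field_simp
        ring
    _ ≤ (∫ z in Metric.ball (0 : EuclideanSpace ℝ (Fin d)) r, ‖z‖ ^ 2 * ν ‖z‖) / r ^ 2 := by
        gcongr
        exact hlow.trans hmono



variable {d : ℕ} {ν : ℝ → ℝ}

/-- shell decomposition: T r ≤ ν r * vol(ball 2r) + T (2r) -/
lemma tail_shell (hd : 1 ≤ d)
    (hν_pos : ∀ r : ℝ, 0 < r → 0 < ν r)
    (hν_mono : ∀ r₁ r₂ : ℝ, 0 < r₁ → r₁ ≤ r₂ → ν r₂ ≤ ν r₁)
    (hint : Integrable (fun z : EuclideanSpace ℝ (Fin d) => min (‖z‖ ^ 2) 1 * ν ‖z‖))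
    {r : ℝ} (hr : 0 < r) :
    tailInt d ν r ≤ ν r
        * (volume (Metric.ball (0 : EuclideanSpace ℝ (Fin d)) (2*r))).toReal
      + tailInt d ν (2*r) := by
  have hIT := integrableOn_tail hd hν_pos hint hr
  have hsplit := integral_inter_add_diff (μ := volume)
    (s := (Metric.ball (0 : EuclideanSpace ℝ (Fin d)) r)ᶜ)
    (t := Metric.ball (0 : EuclideanSpace ℝ (Fin d)) (2*r))
    (f := fun z => ν ‖z‖) measurableSet_ball hIT
  have hdiff : (Metric.ball (0 : EuclideanSpace ℝ (Fin d)) r)ᶜ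
      \ Metric.ball (0 : EuclideanSpace ℝ (Fin d)) (2*r)
      = (Metric.ball (0 : EuclideanSpace ℝ (Fin d)) (2*r))ᶜ := by
    ext z
    simp only [Set.mem_diff, Set.mem_compl_iff, Metric.mem_ball, dist_zero_right, not_lt]
    constructor
    · rintro ⟨-, h2⟩; exact h2
    · intro h; exact ⟨by linarith, h⟩
  rw [hdiff] at hsplit
  have hshell : (∫ z in (Metric.ball (0 : EuclideanSpace ℝ (Fin d)) r)ᶜ
        ∩ Metric.ball (0 : EuclideanSpace ℝ (Fin d)) (2*r), ν ‖z‖)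
      ≤ ν r * (volume (Metric.ball (0 : EuclideanSpace ℝ (Fin d)) (2*r))).toReal := by
    have hmfin : volume ((Metric.ball (0 : EuclideanSpace ℝ (Fin d)) r)ᶜ
        ∩ Metric.ball (0 : EuclideanSpace ℝ (Fin d)) (2*r)) < ⊤ :=
      (measure_mono Set.inter_subset_right).trans_lt measure_ball_lt_top
    have h1 : (∫ z in (Metric.ball (0 : EuclideanSpace ℝ (Fin d)) r)ᶜ
          ∩ Metric.ball (0 : EuclideanSpace ℝ (Fin d)) (2*r), ν ‖z‖)
        ≤ ∫ _z in (Metric.ball (0 : EuclideanSpace ℝ (Fin d)) r)ᶜ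
          ∩ Metric.ball (0 : EuclideanSpace ℝ (Fin d)) (2*r), ν r := by
      refine setIntegral_mono_on (hIT.mono_set Set.inter_subset_left)
        (integrableOn_const hmfin.ne)
        (measurableSet_ball.compl.inter measurableSet_ball) ?_
      intro z hz
      have hzr : r ≤ ‖z‖ := by
        have := hz.1
        simpa [Metric.mem_ball, dist_zero_right, not_lt] using this
      exact hν_mono _ _ hr hzr
    rw [setIntegral_const] at h1
    refine h1.trans ?_
    rw [smul_eq_mul, mul_comm]
    refine mul_le_mul_of_nonneg_left ?_ (hν_pos r hr).le
    exact ENNReal.toReal_mono measure_ball_lt_top.ne (measure_mono Set.inter_subset_right)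
  have : tailInt d ν r = (∫ z in (Metric.ball (0 : EuclideanSpace ℝ (Fin d)) r)ᶜ
        ∩ Metric.ball (0 : EuclideanSpace ℝ (Fin d)) (2*r), ν ‖z‖) + tailInt d ν (2*r) := by
    rw [tailInt, tailInt, ← hsplit]
  rw [this]
  exact add_le_add hshell le_rfl

/-- scaling: T (2r) ≤ 2^d * q2 * T r given ν(2s) ≤ q2 ν(s) for s ≥ R₀ -/
lemma tail_scale (hd : 1 ≤ d)
    (hν_pos : ∀ r : ℝ, 0 < r → 0 < ν r)
    (hν_mono : ∀ r₁ r₂ : ℝ, 0 < r₁ → r₁ ≤ r₂ → ν r₂ ≤ ν r₁)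
    (hint : Integrable (fun z : EuclideanSpace ℝ (Fin d) => min (‖z‖ ^ 2) 1 * ν ‖z‖))
    {q2 R₀ r : ℝ} (hR₀ : 0 < R₀) (hq2 : 0 ≤ q2)
    (hq : ∀ s : ℝ, R₀ ≤ s → ν (2*s) ≤ q2 * ν s)
    (hr : R₀ ≤ r) :
    tailInt d ν (2*r) ≤ (2:ℝ) ^ d * q2 * tailInt d ν r := by
  have hr0 : 0 < r := lt_of_lt_of_le hR₀ hr
  set g : EuclideanSpace ℝ (Fin d) → ℝ :=
    (Metric.ball (0 : EuclideanSpace ℝ (Fin d)) (2*r))ᶜ.indicator (fun z => ν ‖z‖) with hg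
  have e1 : tailInt d ν (2*r) = ∫ z, g z :=
    (integral_indicator measurableSet_ball.compl).symm
  have e2 : ∀ x : EuclideanSpace ℝ (Fin d), g ((2:ℝ) • x)
      = (Metric.ball (0 : EuclideanSpace ℝ (Fin d)) r)ᶜ.indicator
          (fun x => ν (2*‖x‖)) x := by
    intro x
    have hn : ‖(2:ℝ) • x‖ = 2 * ‖x‖ := by
      rw [norm_smul, Real.norm_eq_abs]; norm_num
    by_cases hx : x ∈ (Metric.ball (0 : EuclideanSpace ℝ (Fin d)) r)ᶜ
    · have hx2 : (2:ℝ) • x ∈ (Metric.ball (0 : EuclideanSpace ℝ (Fin d)) (2*r))ᶜ := by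
        simp only [Set.mem_compl_iff, Metric.mem_ball, dist_zero_right, not_lt] at hx ⊢
        rw [hn]; linarith
      rw [hg, Set.indicator_of_mem hx2, Set.indicator_of_mem hx, hn]
    · have hx2 : (2:ℝ) • x ∉ (Metric.ball (0 : EuclideanSpace ℝ (Fin d)) (2*r))ᶜ := by
        simp only [Set.mem_compl_iff, Metric.mem_ball, dist_zero_right, not_lt, not_not,
          not_le] at hx ⊢
        rw [hn]; linarith
      rw [hg, Set.indicator_of_notMem hx2, Set.indicator_of_notMem hx]
  have e3 : ∫ x, g ((2:ℝ) • x)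
      = |(((2:ℝ) ^ Module.finrank ℝ (EuclideanSpace ℝ (Fin d))))⁻¹| • ∫ z, g z :=
    Measure.integral_comp_smul volume g 2
  have hfr : Module.finrank ℝ (EuclideanSpace ℝ (Fin d)) = d := finrank_euclideanSpace_fin
  have habs : |(((2:ℝ) ^ Module.finrank ℝ (EuclideanSpace ℝ (Fin d))))⁻¹| = ((2:ℝ) ^ d)⁻¹ := by
    rw [hfr, abs_of_nonneg (by positivity)]
  have e4 : ∫ z, g z = (2:ℝ) ^ d * ∫ x, g ((2:ℝ) • x) := by
    rw [e3, habs, smul_eq_mul, ← mul_assoc, mul_inv_cancel₀ (by positivity), one_mul]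
  have e5 : ∫ x, g ((2:ℝ) • x)
      = ∫ x in (Metric.ball (0 : EuclideanSpace ℝ (Fin d)) r)ᶜ, ν (2*‖x‖) := by
    simp_rw [e2]
    exact integral_indicator measurableSet_ball.compl
  -- quasi measure preserving
  have hqmp : Measure.QuasiMeasurePreserving (fun x : EuclideanSpace ℝ (Fin d) => (2:ℝ) • x)
      volume volume := by
    refine ⟨measurable_const_smul _, ?_⟩
    rw [Measure.map_addHaar_smul volume (two_ne_zero)]
    exact Measure.smul_absolutelyContinuous
  have hae2 : AEMeasurable (fun x : EuclideanSpace ℝ (Fin d) => ν (2*‖x‖)) := by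
    have := (nu_aemeasurable hd hint).comp_quasiMeasurePreserving hqmp
    refine this.congr ?_
    refine Filter.Eventually.of_forall fun x => ?_
    have hn : ‖(2:ℝ) • x‖ = 2 * ‖x‖ := by
      rw [norm_smul, Real.norm_eq_abs]; norm_num
    simp [Function.comp, hn]
  have hInt2 : IntegrableOn (fun x : EuclideanSpace ℝ (Fin d) => ν (2*‖x‖))
      (Metric.ball (0 : EuclideanSpace ℝ (Fin d)) r)ᶜ := by
    refine Integrable.mono' (integrableOn_tail hd hν_pos hint hr0)
      hae2.aestronglyMeasurable.restrict ?_
    rw [ae_restrict_iff' measurableSet_ball.compl]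
    refine Filter.Eventually.of_forall fun x hx => ?_
    have hxr : r ≤ ‖x‖ := by
      simpa [Metric.mem_ball, dist_zero_right, not_lt] using hx
    have hx0 : 0 < ‖x‖ := lt_of_lt_of_le hr0 hxr
    have h1 : 0 ≤ ν (2*‖x‖) := (hν_pos _ (by linarith)).le
    rw [Real.norm_eq_abs, abs_of_nonneg h1]
    exact hν_mono _ _ hx0 (by linarith)
  have e6 : (∫ x in (Metric.ball (0 : EuclideanSpace ℝ (Fin d)) r)ᶜ, ν (2*‖x‖))
      ≤ q2 * tailInt d ν r := by
    have hmono := setIntegral_mono_on hInt2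
      ((integrableOn_tail hd hν_pos hint hr0).const_mul q2)
      measurableSet_ball.compl ?_
    · refine hmono.trans ?_
      rw [tailInt, ← integral_const_mul]
    · intro x hx
      have hxr : r ≤ ‖x‖ := by
        simpa [Metric.mem_ball, dist_zero_right, not_lt] using hx
      exact hq ‖x‖ (le_trans hr hxr)
  calc tailInt d ν (2*r) = (2:ℝ) ^ d * ∫ x, g ((2:ℝ) • x) := by rw [e1, e4]
    _ = (2:ℝ) ^ d * ∫ x in (Metric.ball (0 : EuclideanSpace ℝ (Fin d)) r)ᶜ, ν (2*‖x‖) := by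
        rw [e5]
    _ ≤ (2:ℝ) ^ d * (q2 * tailInt d ν r) :=
        mul_le_mul_of_nonneg_left e6 (by positivity)
    _ = (2:ℝ) ^ d * q2 * tailInt d ν r := by ring


end Stmt4Aux


theorem statement4
    (d : ℕ) (hd : 1 ≤ d) (ν : ℝ → ℝ)
    (hν_pos : ∀ r : ℝ, 0 < r → 0 < ν r)
    (hν_mono : ∀ r₁ r₂ : ℝ, 0 < r₁ → r₁ ≤ r₂ → ν r₂ ≤ ν r₁)
    (hint : Integrable (fun z : EuclideanSpace ℝ (Fin d) => min (‖z‖ ^ 2) 1 * ν ‖z‖))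
    (β M : ℝ) (hβ : β ∈ Set.Ioo (0:ℝ) 2) (hM : 1 < M)
    (hA1 : ∀ r₁ r₂ : ℝ, 0 < r₁ → r₁ < r₂ → ν r₁ ≤ M * (r₂ / r₁) ^ ((d:ℝ) + β) * ν r₂)
    (α : ℝ) (hα : α ∈ Set.Ioo (0:ℝ) 2)
    (hA2 : ∀ lam : ℝ, 0 < lam →
      Tendsto (fun r : ℝ => ν (lam * r) / ν r) atTop (nhds (lam ^ (-(d:ℝ) - α))))
:
    ∀ R : ℝ, 0 < R → ∃ c : ℝ, 0 < c ∧ ∀ r : ℝ, R ≤ r → hfun d ν r ≤ c * K d ν r := by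
  intro R hR
  obtain ⟨hα0, hα2⟩ := hα
  -- choose q2 and threshold R₀ from (A2) at lam = 2
  set q2 : ℝ := (2:ℝ) ^ (-(d:ℝ) - α/2) with hq2def
  have hq2pos : 0 < q2 := Real.rpow_pos_of_pos two_pos _
  have hlt : (2:ℝ) ^ (-(d:ℝ) - α) < q2 :=
    Real.rpow_lt_rpow_of_exponent_lt one_lt_two (by linarith)
  have hev : ∀ᶠ r in atTop, ν (2 * r) / ν r < q2 :=
    (hA2 2 two_pos).eventually_lt_const hlt
  obtain ⟨R₁, hR₁⟩ := eventually_atTop.1 hev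
  set R₀ : ℝ := max R₁ 1 with hR₀def
  have hR₀pos : (0:ℝ) < R₀ := lt_of_lt_of_le one_pos (le_max_right _ _)
  have hq : ∀ s : ℝ, R₀ ≤ s → ν (2*s) ≤ q2 * ν s := by
    intro s hs
    have hspos : 0 < s := lt_of_lt_of_le hR₀pos hs
    have h1 := hR₁ s (le_trans (le_max_left _ _) hs)
    have hνs := hν_pos s hspos
    have heq : ν (2*s) = (ν (2*s) / ν s) * ν s := by field_simp
    rw [heq]
    exact mul_le_mul_of_nonneg_right h1.le hνs.le
  set q : ℝ := (2:ℝ) ^ d * q2 with hqdef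
  have hqpos : 0 < q := by positivity
  have hqlt1 : q < 1 := by
    have h1 : ((2:ℝ) ^ d : ℝ) = (2:ℝ) ^ ((d:ℕ):ℝ) := (Real.rpow_natCast 2 d).symm
    rw [hqdef, hq2def, h1, ← Real.rpow_add two_pos]
    have he : ((d:ℕ):ℝ) + (-(d:ℝ) - α/2) = -(α/2) := by push_cast; ring
    rw [he]
    exact Real.rpow_lt_one_of_one_lt_of_neg one_lt_two (by linarith)
  have h1q : (0:ℝ) < 1 - q := by linarith
  -- constants
  set Vb : ℝ := (volume (Metric.ball (0 : EuclideanSpace ℝ (Fin d)) 1)).toReal with hVbdef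
  have hVbpos : 0 < Vb := Stmt4Aux.vol_ball_toReal_pos hd one_pos
  set cK : ℝ := (1/4 : ℝ) * (1 - (1/2:ℝ)^d) * Vb with hcKdef
  have hhalf : ((1:ℝ)/2)^d < 1 := pow_lt_one₀ (by norm_num) (by norm_num) (by omega)
  have hhalf0 : (0:ℝ) ≤ ((1:ℝ)/2)^d := by positivity
  have hcKpos : 0 < cK := by
    rw [hcKdef]; nlinarith
  have hKlow : ∀ r : ℝ, 0 < r → cK * (r ^ d * ν r) ≤ K d ν r := by
    intro r hr
    have := Stmt4Aux.K_lower hd hν_pos hν_mono hint hr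
    rw [hcKdef, hVbdef]
    exact this
  have hKnonneg : ∀ r : ℝ, 0 < r → 0 ≤ K d ν r := by
    intro r hr
    refine le_trans ?_ (hKlow r hr)
    exact mul_nonneg hcKpos.le (mul_nonneg (by positivity) (hν_pos r hr).le)
  -- large r : tail ≤ cL * K
  set cL : ℝ := (2:ℝ)^d * Vb / (1-q) / cK with hcLdef
  have hcLpos : 0 < cL := by
    rw [hcLdef]
    exact div_pos (div_pos (by positivity) h1q) hcKpos
  have hlarge : ∀ r : ℝ, R₀ ≤ r → Stmt4Aux.tailInt d ν r ≤ cL * K d ν r := by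
    intro r hr
    have hr0 : 0 < r := lt_of_lt_of_le hR₀pos hr
    have h1 := Stmt4Aux.tail_shell hd hν_pos hν_mono hint hr0
    have h2 := Stmt4Aux.tail_scale hd hν_pos hν_mono hint hR₀pos hq2pos.le hq hr
    rw [← hqdef] at h2
    have hvol2 : (volume (Metric.ball (0 : EuclideanSpace ℝ (Fin d)) (2*r))).toReal
        = (2:ℝ)^d * r^d * Vb := by
      rw [Stmt4Aux.vol_ball_toReal hd (by linarith : (0:ℝ) < 2*r), hVbdef, mul_pow]
    rw [hvol2] at h1
    have h4 : (1 - q) * Stmt4Aux.tailInt d ν r ≤ (2:ℝ)^d * Vb * (r^d * ν r) := by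
      nlinarith [h1, h2]
    have h5 : Stmt4Aux.tailInt d ν r ≤ ((2:ℝ)^d * Vb / (1-q)) * (r^d * ν r) := by
      rw [div_mul_eq_mul_div, le_div_iff₀ h1q]
      nlinarith [h4]
    refine h5.trans ?_
    have h6 := hKlow r hr0
    have hcLcK : cL * cK = (2:ℝ)^d * Vb / (1-q) := by
      rw [hcLdef]
      exact div_mul_cancel₀ _ hcKpos.ne'
    calc ((2:ℝ)^d * Vb / (1-q)) * (r^d * ν r)
        = cL * (cK * (r^d * ν r)) := by rw [← hcLcK]; ring
      _ ≤ cL * K d ν r := mul_le_mul_of_nonneg_left h6 hcLpos.le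
  -- small r : tail ≤ cS * K
  have hTRnn : 0 ≤ Stmt4Aux.tailInt d ν R := Stmt4Aux.tail_nonneg hd hν_pos R
  set δ : ℝ := cK * (R ^ d * ν R₀) with hδdef
  have hδpos : 0 < δ :=
    mul_pos hcKpos (mul_pos (pow_pos hR d) (hν_pos _ hR₀pos))
  set cS : ℝ := Stmt4Aux.tailInt d ν R / δ with hcSdef
  have hcSnn : 0 ≤ cS := div_nonneg hTRnn hδpos.le
  have hsmall : ∀ r : ℝ, R ≤ r → r ≤ R₀ → Stmt4Aux.tailInt d ν r ≤ cS * K d ν r := by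
    intro r hrR hrR₀
    have hr0 : 0 < r := lt_of_lt_of_le hR hrR
    have h1 : Stmt4Aux.tailInt d ν r ≤ Stmt4Aux.tailInt d ν R :=
      Stmt4Aux.tail_mono hd hν_pos hint hR hrR
    have h2 : δ ≤ K d ν r := by
      refine le_trans ?_ (hKlow r hr0)
      rw [hδdef]
      have hp1 : R ^ d ≤ r ^ d := pow_le_pow_left₀ hR.le hrR d
      have hp2 : ν R₀ ≤ ν r := hν_mono r R₀ hr0 hrR₀
      have hmm : R ^ d * ν R₀ ≤ r ^ d * ν r :=
        mul_le_mul hp1 hp2 (hν_pos _ hR₀pos).le (by positivity)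
      exact mul_le_mul_of_nonneg_left hmm hcKpos.le
    calc Stmt4Aux.tailInt d ν r ≤ Stmt4Aux.tailInt d ν R := h1
      _ = cS * δ := by rw [hcSdef, div_mul_cancel₀ _ hδpos.ne']
      _ ≤ cS * K d ν r := mul_le_mul_of_nonneg_left h2 hcSnn
  -- combine
  set c : ℝ := 1 + max cL cS with hcdef
  have hmaxnn : 0 ≤ max cL cS := le_trans hcLpos.le (le_max_left _ _)
  refine ⟨c, by rw [hcdef]; linarith, ?_⟩
  intro r hrR
  have hr0 : 0 < r := lt_of_lt_of_le hR hrR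
  have hsplit := Stmt4Aux.hfun_split hd hν_pos hint hr0
  have hT : Stmt4Aux.tailInt d ν r ≤ max cL cS * K d ν r := by
    rcases le_total r R₀ with h | h
    · exact (hsmall r hrR h).trans
        (mul_le_mul_of_nonneg_right (le_max_right _ _) (hKnonneg r hr0))
    · exact (hlarge r h).trans
        (mul_le_mul_of_nonneg_right (le_max_left _ _) (hKnonneg r hr0))
  rw [hsplit, hcdef]
  have hKnn := hKnonneg r hr0
  nlinarith [hT]

end
end

section
/- Assume (A2) and the normalization ψ(ξ) = 1 for |ξ| = 1. For s ≥ 1 set ν^s(x) = s · ψ^{-1}(1/s)^{-d} · ν(x/ψ^{-1}(1/s)). Then for every δ > 0 there exist s₀ ≥ 1 and C > 0 such that ν^s(y) ≤ C·|y|^{-d-α/2} for all s ≥ s₀ and all y with |y| ≥ δ. -/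
open MeasureTheory Filter Real
open scoped RealInnerProductSpace

noncomputable section

-- ===================== auxiliary lemmas =====================

section AuxLemmas

variable {d : ℕ} {ν : ℝ → ℝ}

lemma nu_aemeas (hd : 1 ≤ d)
    (hint : Integrable (fun z : EuclideanSpace ℝ (Fin d) => min (‖z‖ ^ 2) 1 * ν ‖z‖)) :
    AEMeasurable (fun z : EuclideanSpace ℝ (Fin d) => ν ‖z‖) volume := by
  haveI : Nonempty (Fin d) := ⟨⟨0, hd⟩⟩
  have hf := hint.aemeasurable
  have hg : AEMeasurable (fun z : EuclideanSpace ℝ (Fin d) =>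
      (min (‖z‖ ^ 2) 1)⁻¹ * (min (‖z‖ ^ 2) 1 * ν ‖z‖)) volume :=
    (Measurable.aemeasurable (by measurability)).mul hf
  refine hg.congr ?_
  have h0 : (volume : Measure (EuclideanSpace ℝ (Fin d))) {0} = 0 := measure_singleton 0
  refine (measure_mono_null ?_ h0 : _)
  intro z hz
  simp only [Set.mem_compl_iff, Set.mem_setOf_eq] at hz ⊢
  by_contra h0z
  apply hz
  have hz0 : (0:ℝ) < ‖z‖ := by
    simpa [norm_pos_iff] using (h0z : z ≠ (0 : EuclideanSpace ℝ (Fin d)))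
  have hmin : (0:ℝ) < min (‖z‖ ^ 2) 1 := lt_min (by positivity) one_pos
  field_simp

lemma nu_ae_nonneg (hd : 1 ≤ d) (hν_pos : ∀ r : ℝ, 0 < r → 0 < ν r) :
    ∀ᵐ z : EuclideanSpace ℝ (Fin d), 0 ≤ ν ‖z‖ := by
  haveI : Nonempty (Fin d) := ⟨⟨0, hd⟩⟩
  have h0 : (volume : Measure (EuclideanSpace ℝ (Fin d))) {0} = 0 := measure_singleton 0
  refine (measure_mono_null ?_ h0 : _)
  intro z hz
  simp only [Set.mem_compl_iff, Set.mem_setOf_eq, not_le] at hz ⊢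
  by_contra h0z
  exact absurd ((hν_pos _ (by simpa [norm_pos_iff] using (h0z : z ≠ 0))).le) (not_le.2 hz)

lemma onecos_bound (ξ z : EuclideanSpace ℝ (Fin d)) (hν : 0 ≤ ν ‖z‖) :
    (1 - Real.cos ⟪ξ, z⟫) * ν ‖z‖ ≤ max (‖ξ‖ ^ 2) 2 * (min (‖z‖ ^ 2) 1 * ν ‖z‖) := by
  rw [← mul_assoc]
  refine mul_le_mul_of_nonneg_right ?_ hν
  rcases le_total (‖z‖ ^ 2) 1 with h | h
  · rw [min_eq_left h]
    have h1 : 1 - Real.cos ⟪ξ, z⟫ ≤ ⟪ξ, z⟫ ^ 2 / 2 := by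
      nlinarith [Real.one_sub_sq_div_two_le_cos (x := ⟪ξ, z⟫)]
    have h2 : ⟪ξ, z⟫ ^ 2 ≤ (‖ξ‖ * ‖z‖) ^ 2 := by
      have := abs_real_inner_le_norm ξ z
      nlinarith [abs_nonneg ⟪ξ, z⟫, le_abs_self ⟪ξ, z⟫, neg_abs_le ⟪ξ, z⟫]
    calc 1 - Real.cos ⟪ξ, z⟫ ≤ (‖ξ‖ * ‖z‖) ^ 2 / 2 := by linarith
      _ ≤ max (‖ξ‖ ^ 2) 2 * ‖z‖ ^ 2 := by
          have : ‖ξ‖ ^ 2 ≤ max (‖ξ‖ ^ 2) 2 := le_max_left _ _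
          nlinarith [sq_nonneg ‖z‖, sq_nonneg ‖ξ‖]
  · rw [min_eq_right h]
    have h2 := Real.neg_one_le_cos ⟪ξ, z⟫
    calc 1 - Real.cos ⟪ξ, z⟫ ≤ 2 := by linarith
      _ ≤ max (‖ξ‖ ^ 2) 2 * 1 := by simp

lemma psi_integrand_integrable (hd : 1 ≤ d) (hν_pos : ∀ r : ℝ, 0 < r → 0 < ν r)
    (hint : Integrable (fun z : EuclideanSpace ℝ (Fin d) => min (‖z‖ ^ 2) 1 * ν ‖z‖))
    (ξ : EuclideanSpace ℝ (Fin d)) :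
    Integrable (fun z : EuclideanSpace ℝ (Fin d) => (1 - Real.cos ⟪ξ, z⟫) * ν ‖z‖) := by
  have hm : AEStronglyMeasurable
      (fun z : EuclideanSpace ℝ (Fin d) => (1 - Real.cos ⟪ξ, z⟫) * ν ‖z‖) volume := by
    refine (AEMeasurable.mul ?_ (nu_aemeas hd hint)).aestronglyMeasurable
    have hc : Continuous fun z : EuclideanSpace ℝ (Fin d) => 1 - Real.cos ⟪ξ, z⟫ :=
      continuous_const.sub (Real.continuous_cos.comp (continuous_const.inner continuous_id))
    exact hc.measurable.aemeasurable
  refine Integrable.mono (hint.const_mul (max (‖ξ‖ ^ 2) 2)) hm ?_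
  filter_upwards [nu_ae_nonneg hd hν_pos] with z hz
  have h1 : 0 ≤ (1 - Real.cos ⟪ξ, z⟫) := by
    have := Real.cos_le_one ⟪ξ, z⟫; linarith
  have h2 : 0 ≤ min (‖z‖ ^ 2) 1 * ν ‖z‖ := mul_nonneg (le_min (by positivity) one_pos.le) hz
  rw [Real.norm_eq_abs, Real.norm_eq_abs, abs_of_nonneg (mul_nonneg h1 hz),
    abs_of_nonneg (mul_nonneg (le_max_of_le_right (by norm_num)) h2)]
  exact onecos_bound ξ z hz

lemma psi_nonneg (hd : 1 ≤ d) (hν_pos : ∀ r : ℝ, 0 < r → 0 < ν r)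
    (ξ : EuclideanSpace ℝ (Fin d)) : 0 ≤ ψ d ν ξ := by
  refine integral_nonneg_of_ae ?_
  filter_upwards [nu_ae_nonneg hd hν_pos] with z hz
  have h1 : 0 ≤ (1 - Real.cos ⟪ξ, z⟫) := by
    have := Real.cos_le_one ⟪ξ, z⟫; linarith
  exact mul_nonneg h1 hz

lemma psi_le (hd : 1 ≤ d) (hν_pos : ∀ r : ℝ, 0 < r → 0 < ν r)
    (hint : Integrable (fun z : EuclideanSpace ℝ (Fin d) => min (‖z‖ ^ 2) 1 * ν ‖z‖))
    (ξ : EuclideanSpace ℝ (Fin d)) :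
    ψ d ν ξ ≤ max (‖ξ‖ ^ 2) 2 *
      ∫ z : EuclideanSpace ℝ (Fin d), min (‖z‖ ^ 2) 1 * ν ‖z‖ := by
  rw [ψ, ← integral_const_mul]
  refine integral_mono_ae (psi_integrand_integrable hd hν_pos hint ξ)
    (hint.const_mul _) ?_
  filter_upwards [nu_ae_nonneg hd hν_pos] with z hz
  exact onecos_bound ξ z hz

end AuxLemmas

section AuxLemmas2

variable {d : ℕ} {ν : ℝ → ℝ}

lemma Iconst_nonneg (hd : 1 ≤ d) (hν_pos : ∀ r : ℝ, 0 < r → 0 < ν r) :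
    0 ≤ ∫ z : EuclideanSpace ℝ (Fin d), min (‖z‖ ^ 2) 1 * ν ‖z‖ := by
  refine integral_nonneg_of_ae ?_
  filter_upwards [nu_ae_nonneg hd hν_pos] with z hz
  exact mul_nonneg (le_min (by positivity) one_pos.le) hz

lemma psistar_bddAbove (hd : 1 ≤ d) (hν_pos : ∀ r : ℝ, 0 < r → 0 < ν r)
    (hint : Integrable (fun z : EuclideanSpace ℝ (Fin d) => min (‖z‖ ^ 2) 1 * ν ‖z‖))
    (r : ℝ) :
    BddAbove {y : ℝ | ∃ z : EuclideanSpace ℝ (Fin d), ‖z‖ ≤ r ∧ ψ d ν z = y} := by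
  refine ⟨max (r ^ 2) 2 * ∫ z : EuclideanSpace ℝ (Fin d), min (‖z‖ ^ 2) 1 * ν ‖z‖, ?_⟩
  rintro y ⟨z, hz, rfl⟩
  refine (psi_le hd hν_pos hint z).trans ?_
  refine mul_le_mul_of_nonneg_right (max_le_max ?_ le_rfl) (Iconst_nonneg hd hν_pos)
  exact pow_le_pow_left₀ (norm_nonneg z) hz 2

lemma le_psistar (hd : 1 ≤ d) (hν_pos : ∀ r : ℝ, 0 < r → 0 < ν r)
    (hint : Integrable (fun z : EuclideanSpace ℝ (Fin d) => min (‖z‖ ^ 2) 1 * ν ‖z‖))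
    {r : ℝ} {z : EuclideanSpace ℝ (Fin d)} (hz : ‖z‖ ≤ r) :
    ψ d ν z ≤ ψstar d ν r :=
  le_csSup (psistar_bddAbove hd hν_pos hint r) ⟨z, hz, rfl⟩

lemma psistar_le {r c : ℝ} (hr : 0 ≤ r)
    (h : ∀ z : EuclideanSpace ℝ (Fin d), ‖z‖ ≤ r → ψ d ν z ≤ c) :
    ψstar d ν r ≤ c := by
  refine csSup_le ⟨ψ d ν 0, 0, by simpa using hr, rfl⟩ ?_
  rintro y ⟨z, hz, rfl⟩
  exact h z hz

lemma psistar_mono (hd : 1 ≤ d) (hν_pos : ∀ r : ℝ, 0 < r → 0 < ν r)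
    (hint : Integrable (fun z : EuclideanSpace ℝ (Fin d) => min (‖z‖ ^ 2) 1 * ν ‖z‖))
    {r₁ r₂ : ℝ} (h0 : 0 ≤ r₁) (h12 : r₁ ≤ r₂) :
    ψstar d ν r₁ ≤ ψstar d ν r₂ := by
  refine csSup_le_csSup (psistar_bddAbove hd hν_pos hint r₂)
    ⟨ψ d ν 0, 0, by simpa using h0, rfl⟩ ?_
  rintro y ⟨z, hz, rfl⟩
  exact ⟨z, hz.trans h12, rfl⟩

lemma psi_continuousAt (hd : 1 ≤ d) (hν_pos : ∀ r : ℝ, 0 < r → 0 < ν r)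
    (hint : Integrable (fun z : EuclideanSpace ℝ (Fin d) => min (‖z‖ ^ 2) 1 * ν ‖z‖))
    (ξ₀ : EuclideanSpace ℝ (Fin d)) :
    ContinuousAt (ψ d ν) ξ₀ := by
  refine continuousAt_of_dominated (bound := fun z =>
      max ((‖ξ₀‖ + 1) ^ 2) 2 * (min (‖z‖ ^ 2) 1 * ν ‖z‖)) ?_ ?_ ?_ ?_
  · refine Filter.Eventually.of_forall fun ξ => ?_
    refine (AEMeasurable.mul ?_ (nu_aemeas hd hint)).aestronglyMeasurable
    have hc : Continuous fun z : EuclideanSpace ℝ (Fin d) => 1 - Real.cos ⟪ξ, z⟫ :=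
      continuous_const.sub (Real.continuous_cos.comp (continuous_const.inner continuous_id))
    exact hc.measurable.aemeasurable
  · have hball : Metric.ball ξ₀ 1 ∈ nhds ξ₀ := Metric.ball_mem_nhds ξ₀ one_pos
    refine Filter.eventually_iff_exists_mem.2 ⟨Metric.ball ξ₀ 1, hball, fun ξ hξ => ?_⟩
    filter_upwards [nu_ae_nonneg hd hν_pos] with z hz
    have h1 : 0 ≤ (1 - Real.cos ⟪ξ, z⟫) := by
      have := Real.cos_le_one ⟪ξ, z⟫; linarith
    rw [Real.norm_eq_abs, abs_of_nonneg (mul_nonneg h1 hz)]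
    refine (onecos_bound ξ z hz).trans ?_
    refine mul_le_mul_of_nonneg_right (max_le_max ?_ le_rfl)
      (mul_nonneg (le_min (by positivity) one_pos.le) hz)
    have : ‖ξ‖ ≤ ‖ξ₀‖ + 1 := by
      have := mem_ball_iff_norm.1 hξ
      have := norm_sub_norm_le ξ ξ₀
      linarith
    exact pow_le_pow_left₀ (norm_nonneg ξ) this 2
  · exact hint.const_mul _
  · refine Filter.Eventually.of_forall fun z => ?_
    have hc : Continuous fun ξ : EuclideanSpace ℝ (Fin d) =>
        (1 - Real.cos ⟪ξ, z⟫) * ν ‖z‖ :=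
      (continuous_const.sub
        (Real.continuous_cos.comp (continuous_id.inner continuous_const))).mul continuous_const
    exact hc.continuousAt

end AuxLemmas2

section AuxLemmas3

variable {d : ℕ} {ν : ℝ → ℝ}

/-- The annulus `1 ≤ ‖w‖ ≤ 2`. -/
def ann (d : ℕ) : Set (EuclideanSpace ℝ (Fin d)) := {w | 1 ≤ ‖w‖ ∧ ‖w‖ ≤ 2}

lemma ann_measurable : MeasurableSet (ann d) := by
  have h1 : MeasurableSet {w : EuclideanSpace ℝ (Fin d) | 1 ≤ ‖w‖} :=
    measurableSet_le measurable_const continuous_norm.measurable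
  have h2 : MeasurableSet {w : EuclideanSpace ℝ (Fin d) | ‖w‖ ≤ 2} :=
    measurableSet_le continuous_norm.measurable measurable_const
  exact h1.inter h2

lemma ann_compact : IsCompact (ann d) := by
  have : ann d = (Metric.closedBall (0 : EuclideanSpace ℝ (Fin d)) 2) \
      (Metric.ball (0 : EuclideanSpace ℝ (Fin d)) 1) := by
    ext w
    simp [ann, Metric.mem_closedBall, Metric.mem_ball, dist_zero_right, not_lt, and_comm]
  rw [this]
  exact (isCompact_closedBall _ _).diff Metric.isOpen_ball

/-- The positive constant `∫_{1≤|w|≤2} (1 - cos w₁) dw`. -/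
def annInt (d : ℕ) (hd : 1 ≤ d) : ℝ :=
  ∫ w in ann d, (1 - Real.cos (w ⟨0, hd⟩))

lemma annInt_pos (hd : 1 ≤ d) : 0 < annInt d hd := by
  haveI : Nonempty (Fin d) := ⟨⟨0, hd⟩⟩
  set i : Fin d := ⟨0, hd⟩
  have hcont : Continuous fun w : EuclideanSpace ℝ (Fin d) => 1 - Real.cos (w i) :=
    continuous_const.sub (Real.continuous_cos.comp (EuclideanSpace.proj i).continuous)
  have hnn : ∀ w : EuclideanSpace ℝ (Fin d), 0 ≤ 1 - Real.cos (w i) := fun w => by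
    have := Real.cos_le_one (w i); linarith
  have hint : IntegrableOn (fun w : EuclideanSpace ℝ (Fin d) => 1 - Real.cos (w i))
      (ann d) volume := hcont.continuousOn.integrableOn_compact ann_compact
  rw [annInt, setIntegral_pos_iff_support_of_nonneg_ae
    (Filter.Eventually.of_forall fun w => hnn w) hint]
  -- measure of support ∩ ann > 0
  set w₀ : EuclideanSpace ℝ (Fin d) := EuclideanSpace.single i (3/2 : ℝ)
  have hw₀ : ‖w₀‖ = 3/2 := by
    rw [EuclideanSpace.norm_single]; norm_num
  have hsub : Metric.ball w₀ (1/8) ⊆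
      (Function.support fun w : EuclideanSpace ℝ (Fin d) => 1 - Real.cos (w i)) ∩ ann d := by
    intro w hw
    have hdist : ‖w - w₀‖ < 1/8 := mem_ball_iff_norm.1 hw
    have hcoord : |w i - 3/2| < 1/8 := by
      have h1 : |(w - w₀) i| ≤ ‖w - w₀‖ := by
        have h2 : ⟪EuclideanSpace.single i (1:ℝ), w - w₀⟫ = (w - w₀) i := by
          simp [EuclideanSpace.inner_single_left]
        calc |(w - w₀) i| = |⟪EuclideanSpace.single i (1:ℝ), w - w₀⟫| := by rw [h2]
          _ ≤ ‖EuclideanSpace.single i (1:ℝ)‖ * ‖w - w₀‖ := abs_real_inner_le_norm _ _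
          _ = ‖w - w₀‖ := by rw [EuclideanSpace.norm_single]; simp
      have h3 : (w - w₀) i = w i - 3/2 := by
        simp [w₀, EuclideanSpace.single_apply, i]
      rw [h3] at h1
      linarith
    have hnorm : |‖w‖ - 3/2| < 1/8 := by
      rw [← hw₀]
      exact lt_of_le_of_lt (abs_norm_sub_norm_le w w₀) hdist
    constructor
    · -- support : cos (w i) < 1
      simp only [Function.mem_support]
      have h4 : 0 < w i := by
        cases' abs_lt.1 hcoord with h5 h6; linarith
      have h5 : w i < π := by
        cases' abs_lt.1 hcoord with h5 h6
        have := Real.pi_gt_three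
        linarith
      have : Real.cos (w i) < Real.cos 0 :=
        Real.cos_lt_cos_of_nonneg_of_le_pi le_rfl h5.le h4
      rw [Real.cos_zero] at this
      intro hcontra
      have : (1:ℝ) - Real.cos (w i) > 0 := by linarith
      linarith [hcontra ▸ this]
    · -- ann
      cases' abs_lt.1 hnorm with h5 h6
      exact ⟨by linarith, by linarith⟩
  calc (0:ENNReal) < volume (Metric.ball w₀ (1/8)) :=
        Metric.measure_ball_pos volume w₀ (by norm_num)
    _ ≤ _ := measure_mono hsub

end AuxLemmas3


section AuxLemmas4

variable {d : ℕ} {ν : ℝ → ℝ}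

lemma scaled_ann_integral (hd : 1 ≤ d) {b : ℝ} (hb : 0 < b) :
    ∫ z in {z : EuclideanSpace ℝ (Fin d) | 1 ≤ b * ‖z‖ ∧ b * ‖z‖ ≤ 2},
      (1 - Real.cos (b * z ⟨0, hd⟩)) = (b ^ d)⁻¹ * annInt d hd := by
  haveI : Nonempty (Fin d) := ⟨⟨0, hd⟩⟩
  set i : Fin d := ⟨0, hd⟩
  set F : EuclideanSpace ℝ (Fin d) → ℝ :=
    (ann d).indicator (fun w => 1 - Real.cos (w i)) with hF
  have hmem : ∀ z : EuclideanSpace ℝ (Fin d),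
      (b • z ∈ ann d) ↔ (1 ≤ b * ‖z‖ ∧ b * ‖z‖ ≤ 2) := by
    intro z
    have : ‖b • z‖ = b * ‖z‖ := by
      rw [norm_smul, Real.norm_eq_abs, abs_of_pos hb]
    simp [ann, this]
  set T : Set (EuclideanSpace ℝ (Fin d)) := {z | 1 ≤ b * ‖z‖ ∧ b * ‖z‖ ≤ 2} with hT
  have hcomp : ∀ z : EuclideanSpace ℝ (Fin d), F (b • z) =
      T.indicator (fun z => 1 - Real.cos (b * z i)) z := by
    intro z
    by_cases h : b • z ∈ ann d
    · have hzT : z ∈ T := (hmem z).1 h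
      rw [hF, Set.indicator_of_mem h, Set.indicator_of_mem hzT]
      have : (b • z) i = b * z i := rfl
      rw [this]
    · have hzT : z ∉ T := fun hc => h ((hmem z).2 hc)
      rw [hF, Set.indicator_of_notMem h, Set.indicator_of_notMem hzT]
  have hset : MeasurableSet T := by
    rw [hT]
    have h1 : MeasurableSet {z : EuclideanSpace ℝ (Fin d) | 1 ≤ b * ‖z‖} :=
      measurableSet_le measurable_const (continuous_norm.measurable.const_mul b)
    have h2 : MeasurableSet {z : EuclideanSpace ℝ (Fin d) | b * ‖z‖ ≤ 2} :=
      measurableSet_le (continuous_norm.measurable.const_mul b) measurable_const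
    exact h1.inter h2
  have key := Measure.integral_comp_smul (volume : Measure (EuclideanSpace ℝ (Fin d))) F b
  rw [show (fun x : EuclideanSpace ℝ (Fin d) => F (b • x)) =
      T.indicator (fun z => 1 - Real.cos (b * z i)) from funext hcomp] at key
  rw [integral_indicator hset, integral_indicator ann_measurable] at key
  rw [key, finrank_euclideanSpace_fin]
  have : |(b ^ d)⁻¹| = (b ^ d)⁻¹ := abs_of_pos (by positivity)
  rw [this, smul_eq_mul]
  rfl

lemma psi_lower (hd : 1 ≤ d) (hν_pos : ∀ r : ℝ, 0 < r → 0 < ν r)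
    (hν_mono : ∀ r₁ r₂ : ℝ, 0 < r₁ → r₁ ≤ r₂ → ν r₂ ≤ ν r₁)
    (hint : Integrable (fun z : EuclideanSpace ℝ (Fin d) => min (‖z‖ ^ 2) 1 * ν ‖z‖))
    {b : ℝ} (hb0 : 0 < b) :
    ν (2 / b) * ((b ^ d)⁻¹ * annInt d hd) ≤
      ψ d ν (b • EuclideanSpace.single (⟨0, hd⟩ : Fin d) (1:ℝ)) := by
  haveI : Nonempty (Fin d) := ⟨⟨0, hd⟩⟩
  set i : Fin d := ⟨0, hd⟩
  set ξ : EuclideanSpace ℝ (Fin d) := b • EuclideanSpace.single i (1:ℝ) with hξ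
  have hinner : ∀ z : EuclideanSpace ℝ (Fin d), ⟪ξ, z⟫ = b * z i := by
    intro z
    rw [hξ, real_inner_smul_left]
    simp [EuclideanSpace.inner_single_left]
  set Ab := {z : EuclideanSpace ℝ (Fin d) | 1 ≤ b * ‖z‖ ∧ b * ‖z‖ ≤ 2} with hAb
  have hsetm : MeasurableSet Ab := by
    have h1 : MeasurableSet {z : EuclideanSpace ℝ (Fin d) | 1 ≤ b * ‖z‖} :=
      measurableSet_le measurable_const (continuous_norm.measurable.const_mul b)
    have h2 : MeasurableSet {z : EuclideanSpace ℝ (Fin d) | b * ‖z‖ ≤ 2} :=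
      measurableSet_le (continuous_norm.measurable.const_mul b) measurable_const
    exact h1.inter h2
  have hAbcompact : IsCompact Ab := by
    have : Ab = (Metric.closedBall (0 : EuclideanSpace ℝ (Fin d)) (2/b)) \
        (Metric.ball (0 : EuclideanSpace ℝ (Fin d)) (1/b)) := by
      ext z
      simp only [hAb, Set.mem_setOf_eq, Set.mem_diff, Metric.mem_closedBall, Metric.mem_ball,
        dist_zero_right, not_lt]
      constructor
      · rintro ⟨h1, h2⟩
        constructor
        · rw [le_div_iff₀ hb0]; nlinarith [mul_comm b ‖z‖]
        · rw [div_le_iff₀ hb0]; nlinarith [mul_comm b ‖z‖]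
      · rintro ⟨h1, h2⟩
        rw [le_div_iff₀ hb0] at h1
        rw [div_le_iff₀ hb0] at h2
        constructor <;> nlinarith [mul_comm b ‖z‖]
    rw [this]
    exact (isCompact_closedBall _ _).diff Metric.isOpen_ball
  -- step 1
  have step1 : ∫ z in Ab, (1 - Real.cos ⟪ξ, z⟫) * ν ‖z‖ ≤ ψ d ν ξ := by
    rw [ψ]
    refine setIntegral_le_integral (psi_integrand_integrable hd hν_pos hint ξ) ?_
    filter_upwards [nu_ae_nonneg hd hν_pos] with z hz
    have h1 : 0 ≤ (1 - Real.cos ⟪ξ, z⟫) := by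
      have := Real.cos_le_one ⟪ξ, z⟫; linarith
    exact mul_nonneg h1 hz
  -- step 2
  have step2 : ∫ z in Ab, (1 - Real.cos (b * z i)) * ν (2/b) ≤
      ∫ z in Ab, (1 - Real.cos ⟪ξ, z⟫) * ν ‖z‖ := by
    refine setIntegral_mono_on ?_ ?_ hsetm ?_
    · have hcont : Continuous fun z : EuclideanSpace ℝ (Fin d) =>
          (1 - Real.cos (b * z i)) * ν (2/b) :=
        (continuous_const.sub (Real.continuous_cos.comp
          (continuous_const.mul (EuclideanSpace.proj i).continuous))).mul continuous_const
      exact hcont.continuousOn.integrableOn_compact hAbcompact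
    · exact (psi_integrand_integrable hd hν_pos hint ξ).integrableOn
    · intro z hz
      obtain ⟨hz1, hz2⟩ := hz
      have hz0 : 0 < ‖z‖ := by
        by_contra h
        push_neg at h
        have : ‖z‖ = 0 := le_antisymm h (norm_nonneg z)
        rw [this, mul_zero] at hz1; linarith
      have hle : ‖z‖ ≤ 2 / b := by rw [le_div_iff₀ hb0]; nlinarith [mul_comm b ‖z‖]
      have hν2 : ν (2/b) ≤ ν ‖z‖ := hν_mono ‖z‖ (2/b) hz0 hle
      have h1 : 0 ≤ (1 - Real.cos (b * z i)) := by
        have := Real.cos_le_one (b * z i); linarith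
      rw [hinner z]
      exact mul_le_mul_of_nonneg_left hν2 h1
  -- step 3
  have step3 : ∫ z in Ab, (1 - Real.cos (b * z i)) * ν (2/b) =
      ((b ^ d)⁻¹ * annInt d hd) * ν (2/b) := by
    rw [integral_mul_const, scaled_ann_integral hd hb0]
  linarith [step1, step2, step3.symm.le, step3.le]

end AuxLemmas4

section Potter

set_option maxHeartbeats 1000000 in
lemma potter (ν : ℝ → ℝ) (hν_pos : ∀ r : ℝ, 0 < r → 0 < ν r)
    (hν_mono : ∀ r₁ r₂ : ℝ, 0 < r₁ → r₁ ≤ r₂ → ν r₂ ≤ ν r₁)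
    (d : ℕ) (α : ℝ) (hα : 0 < α)
    (hA2 : ∀ lam : ℝ, 0 < lam →
      Tendsto (fun r : ℝ => ν (lam * r) / ν r) atTop (nhds (lam ^ (-(d:ℝ) - α))))
    (δ : ℝ) (hδ : 0 < δ) :
    ∃ C₁ R₀ : ℝ, 0 < C₁ ∧ 1 ≤ R₀ ∧ ∀ R : ℝ, R₀ ≤ R → ∀ r : ℝ, δ ≤ r →
      ν (r * R) ≤ C₁ * r ^ (-((d:ℝ) + α / 2)) * ν (2 * R) := by
  set β : ℝ := (d : ℝ) + α / 2 with hβ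
  have hβpos : 0 < β := by positivity
  have hββ : (2:ℝ) ^ (-(d:ℝ) - α) < (2:ℝ) ^ (-β) := by
    rw [Real.rpow_lt_rpow_left_iff one_lt_two]
    rw [hβ]; linarith
  -- T₁ : doubling
  obtain ⟨T₀, hT₀⟩ := eventually_atTop.1
    ((hA2 2 two_pos).eventually_lt_const hββ)
  set T₁ : ℝ := max T₀ 1 with hT₁def
  have hT₁one : (1:ℝ) ≤ T₁ := le_max_right _ _
  have hT₁ : ∀ t : ℝ, T₁ ≤ t → ν (2 * t) ≤ (2:ℝ) ^ (-β) * ν t := by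
    intro t ht
    have htpos : (0:ℝ) < t := lt_of_lt_of_le one_pos (hT₁one.trans ht)
    have h := hT₀ t ((le_max_left _ _).trans ht)
    have hνt : 0 < ν t := hν_pos t htpos
    rw [div_lt_iff₀ hνt] at h
    nlinarith [h]
  -- iteration
  have iter : ∀ k : ℕ, ∀ t : ℝ, T₁ ≤ t →
      ν ((2:ℝ) ^ k * t) ≤ (2:ℝ) ^ (-β * (k:ℝ)) * ν t := by
    intro k
    induction k with
    | zero => intro t _; simp
    | succ n ih =>
      intro t ht
      have htpos : (0:ℝ) < t := lt_of_lt_of_le one_pos (hT₁one.trans ht)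
      have h2n : (1:ℝ) ≤ (2:ℝ) ^ n := one_le_pow₀ one_le_two
      have h2nt : T₁ ≤ (2:ℝ) ^ n * t := le_trans ht (le_mul_of_one_le_left htpos.le h2n)
      have heq : (2:ℝ) ^ (n+1) * t = 2 * ((2:ℝ) ^ n * t) := by ring
      have hlast : (2:ℝ) ^ (-β) * ((2:ℝ) ^ (-β * (n:ℝ)) * ν t) =
          (2:ℝ) ^ (-β * ((n:ℕ)+1:ℕ)) * ν t := by
        rw [← mul_assoc, ← Real.rpow_add two_pos]
        push_cast
        ring_nf
      rw [heq]
      calc ν (2 * ((2:ℝ) ^ n * t)) ≤ (2:ℝ) ^ (-β) * ν ((2:ℝ) ^ n * t) := hT₁ _ h2nt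
        _ ≤ (2:ℝ) ^ (-β) * ((2:ℝ) ^ (-β * (n:ℝ)) * ν t) :=
            mul_le_mul_of_nonneg_left (ih t ht) (Real.rpow_nonneg (by norm_num) _)
        _ = (2:ℝ) ^ (-β * ((n:ℕ)+1:ℕ)) * ν t := hlast
  -- ratio δ/2 bound
  set L : ℝ := (δ/2) ^ (-(d:ℝ) - α) with hL
  have hLpos : 0 < L := Real.rpow_pos_of_pos (by positivity) _
  obtain ⟨T₂, hT₂⟩ := eventually_atTop.1
    ((hA2 (δ/2) (by positivity)).eventually_lt_const (lt_add_one L))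
  set T₃ : ℝ := max T₂ 1 with hT₃def
  have hT₃ : ∀ t : ℝ, T₃ ≤ t → ν (δ/2 * t) ≤ (L + 1) * ν t := by
    intro t ht
    have htpos : (0:ℝ) < t := lt_of_lt_of_le one_pos ((le_max_right _ _).trans ht)
    have h := hT₂ t ((le_max_left _ _).trans ht)
    have hνt : 0 < ν t := hν_pos t htpos
    rw [div_lt_iff₀ hνt] at h
    nlinarith [h]
  -- constants
  refine ⟨(L + 1) * (2*δ) ^ β, max 1 (max (T₁/δ) (T₃/2)), ?_, le_max_left _ _, ?_⟩
  · have h2δ : (0:ℝ) < (2*δ) ^ β := Real.rpow_pos_of_pos (by positivity) _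
    nlinarith [hLpos]
  intro R hR r hr
  have hRpos : (0:ℝ) < R := lt_of_lt_of_le one_pos ((le_max_left _ _).trans hR)
  have hrpos : (0:ℝ) < r := lt_of_lt_of_le hδ hr
  have hδR : T₁ ≤ δ * R := by
    have h1 : T₁ / δ ≤ R := le_trans (le_trans (le_max_left _ _) (le_max_right _ _)) hR
    rw [div_le_iff₀ hδ] at h1
    nlinarith
  have h2R : T₃ ≤ 2 * R := by
    have h1 : T₃ / 2 ≤ R := le_trans (le_trans (le_max_right _ _) (le_max_right _ _)) hR
    rw [div_le_iff₀ two_pos] at h1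
    nlinarith
  have hr1 : (1:ℝ) ≤ r / δ := (one_le_div hδ).2 hr
  set k : ℕ := ⌊Real.logb 2 (r/δ)⌋₊ with hk
  have hlogb_nonneg : 0 ≤ Real.logb 2 (r/δ) := Real.logb_nonneg one_lt_two hr1
  have hk1 : (2:ℝ) ^ k ≤ r / δ := by
    calc (2:ℝ) ^ k = (2:ℝ) ^ (k:ℝ) := (Real.rpow_natCast 2 k).symm
      _ ≤ (2:ℝ) ^ Real.logb 2 (r/δ) :=
          Real.rpow_le_rpow_of_exponent_le one_le_two (Nat.floor_le hlogb_nonneg)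
      _ = r / δ := Real.rpow_logb two_pos (by norm_num) (by positivity)
  have hk2 : r / δ < (2:ℝ) ^ (k+1) := by
    calc r / δ = (2:ℝ) ^ Real.logb 2 (r/δ) :=
          (Real.rpow_logb two_pos (by norm_num) (by positivity)).symm
      _ < (2:ℝ) ^ ((k:ℝ)+1) := by
          refine Real.rpow_lt_rpow_of_exponent_lt one_lt_two ?_
          have h3 := Nat.lt_floor_add_one (Real.logb 2 (r/δ))
          push_cast at h3 ⊢
          linarith
      _ = (2:ℝ) ^ (k+1) := by
          rw [← Real.rpow_natCast 2 (k+1)]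
          push_cast
          ring_nf
  -- main chain
  have hchain1 : ν (r * R) ≤ ν ((2:ℝ) ^ k * (δ * R)) := by
    refine hν_mono _ _ ?_ ?_
    · positivity
    · have h4 : (2:ℝ) ^ k * δ ≤ r := by
        rw [← le_div_iff₀ hδ]
        exact hk1
      nlinarith
  have hchain2 : ν ((2:ℝ) ^ k * (δ * R)) ≤ (2:ℝ) ^ (-β * (k:ℝ)) * ν (δ * R) :=
    iter k (δ * R) hδR
  have hchain3 : ν (δ * R) ≤ (L + 1) * ν (2 * R) := by
    have heq : δ * R = δ/2 * (2 * R) := by ring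
    rw [heq]
    exact hT₃ (2*R) h2R
  have hk3 : (2:ℝ) ^ (-β * (k:ℝ)) ≤ (2*δ) ^ β * r ^ (-β) := by
    have h2k : r / (2*δ) < (2:ℝ) ^ k := by
      have h5 : (2:ℝ) ^ (k+1) = 2 * (2:ℝ)^k := by ring
      rw [h5] at hk2
      rw [div_lt_iff₀ (by positivity)]
      have h6 : r < δ * (2 * (2:ℝ)^k) := by
        rw [div_lt_iff₀ hδ] at hk2
        nlinarith
      nlinarith
    have hpos1 : (0:ℝ) < r / (2*δ) := by positivity
    calc (2:ℝ) ^ (-β * (k:ℝ)) = ((2:ℝ) ^ (k:ℝ)) ^ (-β) := by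
          rw [← Real.rpow_mul (by norm_num : (0:ℝ) ≤ 2)]
          ring_nf
      _ ≤ (r / (2*δ)) ^ (-β) := by
          rw [Real.rpow_natCast]
          exact Real.rpow_le_rpow_of_nonpos hpos1 h2k.le (by linarith)
      _ = (2*δ) ^ β * r ^ (-β) := by
          rw [Real.rpow_neg hpos1.le, Real.div_rpow hrpos.le (by positivity),
            Real.rpow_neg hrpos.le]
          field_simp
  have hνδR : 0 ≤ ν (2 * R) := (hν_pos _ (by positivity)).le
  calc ν (r * R) ≤ (2:ℝ) ^ (-β * (k:ℝ)) * ν (δ * R) := hchain1.trans hchain2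
    _ ≤ (2:ℝ) ^ (-β * (k:ℝ)) * ((L + 1) * ν (2 * R)) :=
        mul_le_mul_of_nonneg_left hchain3 (Real.rpow_nonneg (by norm_num) _)
    _ ≤ ((2*δ) ^ β * r ^ (-β)) * ((L + 1) * ν (2 * R)) := by
        refine mul_le_mul_of_nonneg_right hk3 ?_
        nlinarith [hLpos, hνδR]
    _ = (L + 1) * (2*δ) ^ β * r ^ (-((d:ℝ) + α / 2)) * ν (2 * R) := by
        rw [hβ]; ring

end Potter



set_option maxHeartbeats 1000000 in
theorem statement8
    (d : ℕ) (hd : 1 ≤ d) (ν : ℝ → ℝ)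
    (hν_pos : ∀ r : ℝ, 0 < r → 0 < ν r)
    (hν_mono : ∀ r₁ r₂ : ℝ, 0 < r₁ → r₁ ≤ r₂ → ν r₂ ≤ ν r₁)
    (hint : Integrable (fun z : EuclideanSpace ℝ (Fin d) => min (‖z‖ ^ 2) 1 * ν ‖z‖))
    (hninf : ¬ Integrable (fun z : EuclideanSpace ℝ (Fin d) => ν ‖z‖))
    (α : ℝ) (hα : α ∈ Set.Ioo (0:ℝ) 2)
    (hA2 : ∀ lam : ℝ, 0 < lam →
      Tendsto (fun r : ℝ => ν (lam * r) / ν r) atTop (nhds (lam ^ (-(d:ℝ) - α))))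
    (hnorm : ∀ ξ : EuclideanSpace ℝ (Fin d), ‖ξ‖ = 1 → ψ d ν ξ = 1)
:
    ∀ δ : ℝ, 0 < δ → ∃ s₀ C : ℝ, 1 ≤ s₀ ∧ 0 < C ∧
      ∀ s : ℝ, s₀ ≤ s → ∀ y : EuclideanSpace ℝ (Fin d), δ ≤ ‖y‖ →
        νs d ν s y ≤ C * ‖y‖ ^ (-(d:ℝ) - α / 2) := by
  intro δ hδ
  haveI : Nonempty (Fin d) := ⟨⟨0, hd⟩⟩
  set i : Fin d := ⟨0, hd⟩ with hi
  obtain ⟨C₁, R₀, hC₁, hR₀, hpot⟩ := potter ν hν_pos hν_mono d α hα.1 hA2 δ hδ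
  set cD : ℝ := annInt d hd with hcDdef
  have hcD : 0 < cD := annInt_pos hd
  set ε : ℝ := 1 / R₀ with hεdef
  have hε : 0 < ε := by positivity
  set κ : ℝ := ν (2/ε) * ((ε ^ d)⁻¹ * cD) with hκdef
  have hκ : 0 < κ := by
    have h1 : 0 < ν (2/ε) := hν_pos _ (by positivity)
    have h2 : (0:ℝ) < (ε ^ d)⁻¹ := by positivity
    positivity
  set s₀ : ℝ := max 2 (2/κ) with hs₀def
  refine ⟨s₀, C₁ / cD, le_trans (by norm_num) (le_max_left _ _), by positivity, ?_⟩
  intro s hs y hy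
  have hs2 : (2:ℝ) ≤ s := (le_max_left _ _).trans hs
  have hspos : (0:ℝ) < s := lt_of_lt_of_le two_pos hs2
  have hsκ : 1/s < κ := by
    have h1 : 2/κ ≤ s := (le_max_right _ _).trans hs
    rw [div_le_iff₀ hκ] at h1
    rw [div_lt_iff₀ hspos]
    nlinarith
  have hypos : (0:ℝ) < ‖y‖ := lt_of_lt_of_le hδ hy
  set S : Set ℝ := {r : ℝ | 0 ≤ r ∧ ψstar d ν r = 1/s} with hS
  set b : ℝ := ψinv d ν (1/s) with hbdef
  have hbS : b = sSup S := rfl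
  have hb0 : 0 ≤ b := Real.sSup_nonneg (fun x (hx : x ∈ S) => hx.1)
  have hνsdef : νs d ν s y = s / b ^ d * ν (‖y‖ / b) := rfl
  have hRHSpos : 0 < C₁ / cD * ‖y‖ ^ (-(d:ℝ) - α / 2) := by
    have := Real.rpow_pos_of_pos hypos (-(d:ℝ) - α / 2)
    positivity
  rcases eq_or_lt_of_le hb0 with hbz | hbpos
  · -- b = 0 : νs vanishes
    rw [hνsdef, ← hbz]
    have hdne : d ≠ 0 := by omega
    rw [zero_pow hdne, div_zero, zero_mul]
    exact hRHSpos.le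
  -- b > 0
  have hSne : S.Nonempty := by
    by_contra h
    rw [Set.not_nonempty_iff_eq_empty] at h
    rw [hbS, h, Real.sSup_empty] at hbpos
    exact lt_irrefl _ hbpos
  have hSbdd : BddAbove S := by
    by_contra h
    rw [hbS, Real.sSup_of_not_bddAbove h] at hbpos
    exact lt_irrefl _ hbpos
  -- Key B : ψstar b ≤ 1/s
  have keyB : ψstar d ν b ≤ 1/s := by
    refine psistar_le hb0 ?_
    intro z hz
    have hcont : ContinuousAt (ψ d ν) z := psi_continuousAt hd hν_pos hint z
    have htendsto : Tendsto (fun t : ℝ => ψ d ν (t • z))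
        (nhdsWithin 1 (Set.Ioo (0:ℝ) 1)) (nhds (ψ d ν z)) := by
      have h1 : Tendsto (fun t : ℝ => t • z) (nhds 1) (nhds z) := by
        have := (tendsto_id : Tendsto (fun t : ℝ => t) (nhds 1) (nhds 1)).smul_const z
        rwa [one_smul] at this
      exact (hcont.tendsto.comp (h1.mono_left nhdsWithin_le_nhds))
    haveI : (nhdsWithin (1:ℝ) (Set.Ioo (0:ℝ) 1)).NeBot :=
      right_nhdsWithin_Ioo_neBot one_pos
    refine le_of_tendsto htendsto ?_
    filter_upwards [eventually_mem_nhdsWithin] with t ht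
    obtain ⟨ht0, ht1⟩ := ht
    have htz : ‖t • z‖ < b := by
      rw [norm_smul, Real.norm_eq_abs, abs_of_pos ht0]
      calc t * ‖z‖ ≤ t * b := mul_le_mul_of_nonneg_left hz ht0.le
        _ < 1 * b := by nlinarith
        _ = b := one_mul b
    obtain ⟨r, hrS, hrgt⟩ := exists_lt_of_lt_csSup hSne (by rw [← hbS]; exact htz)
    calc ψ d ν (t • z) ≤ ψstar d ν r := le_psistar hd hν_pos hint hrgt.le
      _ = 1/s := hrS.2
  -- Key C : b ≤ ε
  have keyC : b ≤ ε := by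
    by_contra h
    push_neg at h
    have h1 : κ ≤ ψ d ν (ε • EuclideanSpace.single i (1:ℝ)) := by
      have := psi_lower hd hν_pos hν_mono hint (b := ε) hε
      rw [hκdef]
      exact this
    have h2 : ψ d ν (ε • EuclideanSpace.single i (1:ℝ)) ≤ ψstar d ν ε := by
      refine le_psistar hd hν_pos hint ?_
      rw [norm_smul, Real.norm_eq_abs, abs_of_pos hε, EuclideanSpace.norm_single]
      simp
    have h3 : ψstar d ν ε ≤ ψstar d ν b := psistar_mono hd hν_pos hint hε.le h.le
    linarith [keyB, hsκ]
  -- Main estimate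
  set R : ℝ := 1/b with hRdef
  have hRpos : 0 < R := by positivity
  have hRR₀ : R₀ ≤ R := by
    rw [hRdef]
    rw [hεdef] at keyC
    rw [le_div_iff₀ hbpos]
    rw [le_div_iff₀ (lt_of_lt_of_le one_pos hR₀)] at keyC
    nlinarith
  have hψb_low : ν (2/b) * ((b ^ d)⁻¹ * cD) ≤ ψstar d ν b := by
    refine le_trans (psi_lower hd hν_pos hν_mono hint hbpos) ?_
    refine le_psistar hd hν_pos hint ?_
    rw [norm_smul, Real.norm_eq_abs, abs_of_pos hbpos, EuclideanSpace.norm_single]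
    simp
  set P : ℝ := ν (2/b) with hPdef
  have hP : 0 < P := hν_pos _ (by positivity)
  set A : ℝ := b ^ d with hAdef
  have hA : 0 < A := by positivity
  have hsle : s * (P * (A⁻¹ * cD)) ≤ 1 := by
    calc s * (P * (A⁻¹ * cD)) ≤ s * ψstar d ν b :=
          mul_le_mul_of_nonneg_left hψb_low hspos.le
      _ ≤ s * (1/s) := mul_le_mul_of_nonneg_left keyB hspos.le
      _ = 1 := by field_simp
  have hpot' : ν (‖y‖ * R) ≤ C₁ * ‖y‖ ^ (-((d:ℝ) + α / 2)) * ν (2 * R) :=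
    hpot R hRR₀ ‖y‖ hy
  have harg1 : ‖y‖ / b = ‖y‖ * R := by rw [hRdef]; ring
  have harg2 : 2 / b = 2 * R := by rw [hRdef]; ring
  rw [hνsdef, harg1]
  have hP2 : ν (2 * R) = P := by rw [hPdef, harg2]
  rw [hP2] at hpot'
  have hsA : s / A ≤ 1 / (P * cD) := by
    rw [div_le_div_iff₀ hA (by positivity)]
    have hAA : A⁻¹ * A = 1 := inv_mul_cancel₀ hA.ne'
    calc s * (P * cD) = s * (P * (A⁻¹ * cD)) * A := by
          rw [show s * (P * (A⁻¹ * cD)) * A = s * (P * cD) * (A⁻¹ * A) from by ring, hAA,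
            mul_one]
      _ ≤ 1 * A := mul_le_mul_of_nonneg_right hsle hA.le
  have hQ : 0 ≤ ν (‖y‖ * R) := (hν_pos _ (by positivity)).le
  have hexp : ‖y‖ ^ (-((d:ℝ) + α / 2)) = ‖y‖ ^ (-(d:ℝ) - α / 2) := by
    congr 1
    ring
  calc s / A * ν (‖y‖ * R) ≤ (1 / (P * cD)) * ν (‖y‖ * R) :=
        mul_le_mul_of_nonneg_right hsA hQ
    _ ≤ (1 / (P * cD)) * (C₁ * ‖y‖ ^ (-((d:ℝ) + α / 2)) * P) :=
        mul_le_mul_of_nonneg_left hpot' (by positivity)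
    _ = C₁ / cD * ‖y‖ ^ (-((d:ℝ) + α / 2)) := by
        field_simp
    _ = C₁ / cD * ‖y‖ ^ (-(d:ℝ) - α / 2) := by rw [hexp]

end
end
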